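/- arXiv:2502.08873 — 7 statements merged into one kernel-verified Lean document; each statement's English description precedes it below -/
import Mathlib

section
/- Let G be a finite connected weighted undirected graph and let μ, ν ∈ P(V). Then strong duality holds between the measure min-cut and max-flow linear programs: the optimal value of (minimize Σ_{(i,j)∈E'} w_{ij} k_{ij} over k ∈ ℝ^{E'}, ψ ∈ ℝ^n subject to k ≥ 0, k_{ij} ≥ ψ_i − ψ_j, (μ−ν)ᵀψ ≥ 1) equals the optimal value of (maximize f over f ∈ ℝ, J ∈ ℝ^{E'} subject to f ≥ 0, 0 ≤ J_{ij} ≤ w_{ij} for all (i,j) ∈ E', and B̃J = f(μ−ν)), where B̃ ∈ ℝ^{n×E'} is the oriented node-edge incidence matrix with respect to E' (column of (i,j) equals e_i − e_j). -/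
open Matrix

noncomputable def Ldiv (n N : ℕ) (s t : Fin N → Fin n) : (Fin N → Bool → ℝ) →ₗ[ℝ] (Fin n → ℝ) where
  toFun J v := ∑ e, (J e true - J e false) *
      ((if s e = v then (1:ℝ) else 0) - (if t e = v then (1:ℝ) else 0))
  map_add' J K := by
    funext v
    simp only [Pi.add_apply]
    rw [← Finset.sum_add_distrib]
    exact Finset.sum_congr rfl fun e _ => by ring
  map_smul' r J := by
    funext v
    simp only [Pi.smul_apply, smul_eq_mul, RingHom.id_apply, Finset.mul_sum]
    exact Finset.sum_congr rfl fun e _ => by ring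

lemma Ldiv_apply (n N : ℕ) (s t : Fin N → Fin n) (J : Fin N → Bool → ℝ) (v : Fin n) :
    Ldiv n N s t J v = ∑ e, (J e true - J e false) *
      ((if s e = v then (1:ℝ) else 0) - (if t e = v then (1:ℝ) else 0)) := rfl

lemma aux_delta (n : ℕ) (ψ : Fin n → ℝ) (a : ℝ) (i j : Fin n) :
    ∑ v, a * ((if i = v then (1:ℝ) else 0) - (if j = v then (1:ℝ) else 0)) * ψ v
      = a * (ψ i - ψ j) := by
  have : ∀ v, a * ((if i = v then (1:ℝ) else 0) - (if j = v then (1:ℝ) else 0)) * ψ v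
      = a * ((if i = v then (1:ℝ) else 0) * ψ v) - a * ((if j = v then (1:ℝ) else 0) * ψ v) := by
    intro v; ring
  simp only [this, Finset.sum_sub_distrib, ← Finset.mul_sum, ite_mul, one_mul, zero_mul,
    Finset.sum_ite_eq, Finset.mem_univ, if_true]
  ring

lemma aux_pairing (n N : ℕ) (s t : Fin N → Fin n) (J : Fin N → Bool → ℝ) (ψ : Fin n → ℝ) :
    ∑ v, (Ldiv n N s t J v) * ψ v = ∑ e, (J e true - J e false) * (ψ (s e) - ψ (t e)) := by
  simp only [Ldiv_apply, Finset.sum_mul]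
  rw [Finset.sum_comm]
  exact Finset.sum_congr rfl fun e _ => aux_delta n ψ _ _ _

/-- **Generalized Max Flow–Min Cut, strong duality.**
For a finite connected weighted undirected graph (vertices `Fin n`, edges indexed by
`Fin N` with endpoints `s e ≠ t e` and positive weights `w e`; oriented edges
`E' = {(s e, t e), (t e, s e)}` encoded as `Fin N × Bool`) and probability measures
`μ, ν` on the vertices, the optimal value of the measure min-cut LP
(minimize `Σ_{(i,j)∈E'} w_{ij} k_{ij}` subject to `k ≥ 0`, `k_{ij} ≥ ψ_i - ψ_j`,
`(μ-ν)ᵀψ ≥ 1`) equals the optimal value of the measure max-flow LP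
(maximize `f ≥ 0` over flows `0 ≤ J ≤ w` on oriented edges with `B̃J = f(μ-ν)`,
where `B̃` has the column `e_i - e_j` for the oriented edge `(i,j)`). -/
theorem measure_maxflow_mincut_strong_duality
    (n N : ℕ) (s t : Fin N → Fin n) (w : Fin N → ℝ)
    (hw : ∀ e, 0 < w e) (hst : ∀ e, s e ≠ t e)
    (hconn : (SimpleGraph.fromRel fun i j => ∃ e, s e = i ∧ t e = j).Connected)
    (μ ν : Fin n → ℝ)
    (hμ : (∀ i, 0 ≤ μ i) ∧ ∑ i, μ i = 1)
    (hν : (∀ i, 0 ≤ ν i) ∧ ∑ i, ν i = 1) :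
    sInf {c : ℝ | ∃ (k : Fin N → Bool → ℝ) (ψ : Fin n → ℝ),
          (∀ e b, 0 ≤ k e b) ∧
          (∀ e, ψ (s e) - ψ (t e) ≤ k e true) ∧
          (∀ e, ψ (t e) - ψ (s e) ≤ k e false) ∧
          1 ≤ (μ - ν) ⬝ᵥ ψ ∧
          c = ∑ e, (w e * k e true + w e * k e false)}
      = sSup {f : ℝ | 0 ≤ f ∧ ∃ J : Fin N → Bool → ℝ,
          (∀ e b, 0 ≤ J e b ∧ J e b ≤ w e) ∧
          (∀ v, (∑ e, (J e true - J e false) *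
              ((if s e = v then (1:ℝ) else 0) - (if t e = v then (1:ℝ) else 0)))
            = f * (μ v - ν v))} := by
  classical
  set S := {c : ℝ | ∃ (k : Fin N → Bool → ℝ) (ψ : Fin n → ℝ),
          (∀ e b, 0 ≤ k e b) ∧
          (∀ e, ψ (s e) - ψ (t e) ≤ k e true) ∧
          (∀ e, ψ (t e) - ψ (s e) ≤ k e false) ∧
          1 ≤ (μ - ν) ⬝ᵥ ψ ∧
          c = ∑ e, (w e * k e true + w e * k e false)} with hSdef
  set T := {f : ℝ | 0 ≤ f ∧ ∃ J : Fin N → Bool → ℝ,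
          (∀ e b, 0 ≤ J e b ∧ J e b ≤ w e) ∧
          (∀ v, (∑ e, (J e true - J e false) *
              ((if s e = v then (1:ℝ) else 0) - (if t e = v then (1:ℝ) else 0)))
            = f * (μ v - ν v))} with hTdef
  by_cases hd : μ = ν
  · -- degenerate case: both sides are junk value 0
    have hSempty : S = ∅ := by
      ext c
      simp only [hSdef, Set.mem_setOf_eq, Set.mem_empty_iff_false, iff_false]
      rintro ⟨k, ψ, -, -, -, h1, -⟩
      rw [hd, sub_self, zero_dotProduct] at h1
      linarith
    have hTnb : ¬ BddAbove T := by
      rintro ⟨M, hM⟩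
      have hmem : max M 0 + 1 ∈ T := by
        refine ⟨by positivity, fun _ _ => 0, fun e b => ⟨le_refl _, (hw e).le⟩, fun v => ?_⟩
        simp [hd]
      have h2 := hM hmem
      have h3 := le_max_left M 0
      linarith
    rw [hSempty, Real.sInf_empty, Real.sSup_of_not_bddAbove hTnb]
  · -- main case
    set d : Fin n → ℝ := μ - ν with hddef
    have hd' : d ≠ 0 := sub_ne_zero.mpr hd
    set L := Ldiv n N s t with hLdef
    set Box : Set (Fin N → Bool → ℝ) :=
      Set.univ.pi fun e => Set.univ.pi fun _ => Set.Icc 0 (w e) with hBoxdef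
    have hBoxmem : ∀ J : Fin N → Bool → ℝ, J ∈ Box ↔ ∀ e b, 0 ≤ J e b ∧ J e b ≤ w e := by
      intro J
      simp only [hBoxdef, Set.mem_univ_pi, Set.mem_Icc]
    have hBoxC : IsCompact Box :=
      isCompact_univ_pi fun e => isCompact_univ_pi fun _ => isCompact_Icc
    have hBoxconv : Convex ℝ Box :=
      convex_pi fun e _ => convex_pi fun _ _ => convex_Icc 0 (w e)
    set D : Set (Fin n → ℝ) := L '' Box with hDdef
    have hDC : IsCompact D := hBoxC.image L.continuous_of_finiteDimensional
    have hDconv : Convex ℝ D := hBoxconv.linear_image L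
    have hDclosed : IsClosed D := hDC.isClosed
    -- characterization of T
    have hTmem : ∀ f : ℝ, f ∈ T ↔ 0 ≤ f ∧ f • d ∈ D := by
      intro f
      constructor
      · rintro ⟨hf0, J, hJ, hdiv⟩
        refine ⟨hf0, J, (hBoxmem J).mpr hJ, ?_⟩
        funext v
        rw [Ldiv_apply, hdiv v]
        simp [hddef]
      · rintro ⟨hf0, J, hJbox, hLJ⟩
        refine ⟨hf0, J, (hBoxmem J).mp hJbox, fun v => ?_⟩
        have h2 := congrFun hLJ v
        rw [Ldiv_apply] at h2
        rw [h2]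
        simp [hddef]
    have hT0 : (0:ℝ) ∈ T := by
      refine ⟨le_refl 0, fun _ _ => 0, fun e b => ⟨le_refl _, (hw e).le⟩, fun v => by simp⟩
    have hdnorm : 0 < ‖d‖ := norm_pos_iff.mpr hd'
    obtain ⟨M, hM⟩ := hDC.isBounded.subset_closedBall 0
    have hTbdd : BddAbove T := by
      refine ⟨M / ‖d‖, fun f hf => ?_⟩
      obtain ⟨hf0, hfD⟩ := (hTmem f).mp hf
      have h1 : ‖f • d‖ ≤ M := by
        have h2 := hM hfD
        simpa [Metric.mem_closedBall, dist_zero_right] using h2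
      rw [norm_smul, Real.norm_eq_abs, abs_of_nonneg hf0] at h1
      rw [le_div_iff₀ hdnorm]
      exact h1
    have hTclosed : IsClosed T := by
      have heq : T = {f : ℝ | 0 ≤ f} ∩ (fun f : ℝ => f • d) ⁻¹' D := Set.ext fun f => hTmem f
      rw [heq]
      exact (isClosed_le continuous_const continuous_id).inter
        (hDclosed.preimage (continuous_id.smul continuous_const))
    set F := sSup T with hFdef
    have hFT : F ∈ T := hTclosed.csSup_mem ⟨0, hT0⟩ hTbdd
    have hF0 : 0 ≤ F := le_csSup hTbdd hT0
    -- weak duality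
    have hweak : ∀ c ∈ S, ∀ f ∈ T, f ≤ c := by
      rintro c ⟨k, ψ, hk0, hkt, hkf, hψ, rfl⟩ f ⟨hf0, J, hJ, hdiv⟩
      have hpair : ∑ v, (f * (μ v - ν v)) * ψ v
          = ∑ e, (J e true - J e false) * (ψ (s e) - ψ (t e)) := by
        rw [← aux_pairing n N s t J ψ]
        exact Finset.sum_congr rfl fun v _ => by rw [Ldiv_apply, hdiv v]
      have hdot : (μ - ν) ⬝ᵥ ψ = ∑ v, (μ v - ν v) * ψ v := by
        simp [dotProduct]
      have step1 : f ≤ f * ((μ - ν) ⬝ᵥ ψ) := by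
        nlinarith
      have step2 : f * ((μ - ν) ⬝ᵥ ψ) = ∑ e, (J e true - J e false) * (ψ (s e) - ψ (t e)) := by
        rw [hdot, Finset.mul_sum, ← hpair]
        exact Finset.sum_congr rfl fun v _ => by ring
      have step3 : ∑ e, (J e true - J e false) * (ψ (s e) - ψ (t e))
          ≤ ∑ e, (w e * k e true + w e * k e false) := by
        refine Finset.sum_le_sum fun e _ => ?_
        obtain ⟨hJt0, hJtw⟩ := hJ e true
        obtain ⟨hJf0, hJfw⟩ := hJ e false
        have h1 := hkt e
        have h2 := hkf e
        have h3 := hk0 e true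
        have h4 := hk0 e false
        nlinarith [mul_le_mul_of_nonneg_left h1 hJt0, mul_le_mul_of_nonneg_left h2 hJf0,
          mul_le_mul_of_nonneg_right hJtw h3, mul_le_mul_of_nonneg_right hJfw h4]
      linarith
    -- S nonempty
    have hSne : S.Nonempty := by
      obtain ⟨v₀, hv₀⟩ := Function.ne_iff.mp hd'
      have hq : 0 < ∑ v, d v * d v := by
        refine Finset.sum_pos' (fun v _ => mul_self_nonneg _) ⟨v₀, Finset.mem_univ _, ?_⟩
        have hne : d v₀ ≠ 0 := by simpa using hv₀
        exact mul_self_pos.mpr hne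
      set ψ₀ : Fin n → ℝ := (∑ v, d v * d v)⁻¹ • d with hψ₀def
      have hψ₀dot : (μ - ν) ⬝ᵥ ψ₀ = 1 := by
        simp only [hψ₀def, dotProduct, Pi.smul_apply, smul_eq_mul]
        have hrw : ∑ v, (μ - ν) v * ((∑ u, d u * d u)⁻¹ * d v)
            = (∑ u, d u * d u)⁻¹ * ∑ v, d v * d v := by
          rw [Finset.mul_sum]
          exact Finset.sum_congr rfl fun v _ => by
            simp only [hddef, Pi.sub_apply]; ring
        rw [hrw]
        exact inv_mul_cancel₀ hq.ne'
      exact ⟨∑ e, (w e * max (ψ₀ (s e) - ψ₀ (t e)) 0 + w e * max (ψ₀ (t e) - ψ₀ (s e)) 0),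
        fun e b => if b then max (ψ₀ (s e) - ψ₀ (t e)) 0 else max (ψ₀ (t e) - ψ₀ (s e)) 0,
        ψ₀, fun e b => by cases b <;> simp [le_max_right],
        fun e => by simp [le_max_left], fun e => by simp [le_max_left],
        hψ₀dot.ge, by simp⟩
    have hSbdd : BddBelow S := by
      refine ⟨0, fun c hc => ?_⟩
      obtain ⟨k, ψ, hk0, -, -, -, rfl⟩ := hc
      exact Finset.sum_nonneg fun e _ => add_nonneg
        (mul_nonneg (hw e).le (hk0 e true)) (mul_nonneg (hw e).le (hk0 e false))
    refine le_antisymm ?_ (csSup_le ⟨0, hT0⟩ fun f hf => le_csInf hSne fun c hc => hweak c hc f hf)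
    -- strong duality: sInf S ≤ F
    by_contra hcon
    push_neg at hcon
    set ε := (sInf S - F) / 2 with hεdef
    have hε : 0 < ε := by simp only [hεdef]; linarith
    have hnotin : (F + ε) • d ∉ D := by
      intro h
      have hmem : F + ε ∈ T := (hTmem _).mpr ⟨by linarith, h⟩
      have hle := le_csSup hTbdd hmem
      linarith
    obtain ⟨g, u, hgu, hgx⟩ := geometric_hahn_banach_closed_point hDconv hDclosed hnotin
    set ψ : Fin n → ℝ := fun v => g (Pi.single v 1) with hψdef
    have hg : ∀ x : Fin n → ℝ, g x = ∑ v, x v * ψ v := by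
      intro x
      have hx : x = ∑ v, x v • (Pi.single v 1 : Fin n → ℝ) := by
        funext j
        simp [Finset.sum_apply, Pi.single_apply]
      conv_lhs => rw [hx]
      rw [map_sum]
      simp [hψdef, smul_eq_mul]
    set J₀ : Fin N → Bool → ℝ := fun e b =>
      if 0 < (if b then ψ (s e) - ψ (t e) else ψ (t e) - ψ (s e)) then w e else 0 with hJ₀def
    have hJ₀box : J₀ ∈ Box := by
      rw [hBoxmem]
      intro e b
      have hx : ∀ x : ℝ, 0 ≤ (if 0 < x then w e else 0) ∧ (if 0 < x then w e else 0) ≤ w e := by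
        intro x
        split
        · exact ⟨(hw e).le, le_refl _⟩
        · exact ⟨le_refl _, (hw e).le⟩
      exact hx _
    have hval : ∑ e, (J₀ e true - J₀ e false) * (ψ (s e) - ψ (t e))
        = ∑ e, w e * |ψ (s e) - ψ (t e)| := by
      refine Finset.sum_congr rfl fun e _ => ?_
      simp only [hJ₀def, if_true, Bool.false_eq_true, if_false]
      rcases lt_trichotomy (ψ (s e) - ψ (t e)) 0 with h | h | h
      · rw [if_neg (by linarith), if_pos (by linarith), abs_of_neg h]; ring
      · rw [h]; simp
      · rw [if_pos h, if_neg (by linarith), abs_of_pos h]; ring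
    have hsep : ∑ e, w e * |ψ (s e) - ψ (t e)| < u := by
      rw [← hval, ← aux_pairing n N s t J₀ ψ]
      have h1 := hgu (L J₀) ⟨J₀, hJ₀box, rfl⟩
      rwa [hg (L J₀)] at h1
    have habs0 : 0 ≤ ∑ e, w e * |ψ (s e) - ψ (t e)| :=
      Finset.sum_nonneg fun e _ => mul_nonneg (hw e).le (abs_nonneg _)
    set a := (μ - ν) ⬝ᵥ ψ with hadef
    have hux : u < (F + ε) * a := by
      have h1 := hgx
      rw [hg ((F + ε) • d)] at h1
      have h2 : ∑ v, ((F + ε) • d) v * ψ v = (F + ε) * a := by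
        simp only [hadef, dotProduct, Pi.smul_apply, smul_eq_mul, Finset.mul_sum, hddef]
        exact Finset.sum_congr rfl fun v _ => by simp only [Pi.sub_apply]; ring
      rwa [h2] at h1
    have ha : 0 < a := by
      rcases le_or_gt a 0 with h | h
      · exfalso
        have h2 : (F + ε) * a ≤ 0 := mul_nonpos_of_nonneg_of_nonpos (by linarith) h
        linarith
      · exact h
    set ψ' : Fin n → ℝ := a⁻¹ • ψ with hψ'def
    have hψ'dot : (μ - ν) ⬝ᵥ ψ' = 1 := by
      simp only [hψ'def, dotProduct, Pi.smul_apply, smul_eq_mul]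
      have hrw : ∑ v, (μ - ν) v * (a⁻¹ * ψ v) = a⁻¹ * ∑ v, (μ - ν) v * ψ v := by
        rw [Finset.mul_sum]
        exact Finset.sum_congr rfl fun v _ => by ring
      rw [hrw]
      have : a = ∑ v, (μ - ν) v * ψ v := by simp [hadef, dotProduct]
      rw [← this]
      exact inv_mul_cancel₀ ha.ne'
    set c' := ∑ e, (w e * max (ψ' (s e) - ψ' (t e)) 0 + w e * max (ψ' (t e) - ψ' (s e)) 0)
      with hc'def
    have hc'S : c' ∈ S :=
      ⟨fun e b => if b then max (ψ' (s e) - ψ' (t e)) 0 else max (ψ' (t e) - ψ' (s e)) 0,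
        ψ', fun e b => by cases b <;> simp [le_max_right],
        fun e => by simp [le_max_left], fun e => by simp [le_max_left],
        hψ'dot.ge, by simp [hc'def]⟩
    have hc'val : c' = a⁻¹ * ∑ e, w e * |ψ (s e) - ψ (t e)| := by
      rw [hc'def, Finset.mul_sum]
      refine Finset.sum_congr rfl fun e _ => ?_
      have h1 : ψ' (s e) - ψ' (t e) = a⁻¹ * (ψ (s e) - ψ (t e)) := by
        simp only [hψ'def, Pi.smul_apply, smul_eq_mul]; ring
      have h2 : ψ' (t e) - ψ' (s e) = -(a⁻¹ * (ψ (s e) - ψ (t e))) := by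
        simp only [hψ'def, Pi.smul_apply, smul_eq_mul]; ring
      rw [h1, h2]
      have hmax : ∀ x : ℝ, max x 0 + max (-x) 0 = |x| := by
        intro x
        rcases le_or_gt 0 x with h | h
        · rw [max_eq_left h, max_eq_right (by linarith), abs_of_nonneg h]; ring
        · rw [max_eq_right (by linarith), max_eq_left (by linarith), abs_of_neg h]; ring
      have h3 : w e * max (a⁻¹ * (ψ (s e) - ψ (t e))) 0
            + w e * max (-(a⁻¹ * (ψ (s e) - ψ (t e)))) 0
          = w e * |a⁻¹ * (ψ (s e) - ψ (t e))| := by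
        rw [← hmax]; ring
      rw [h3, abs_mul, abs_of_pos (inv_pos.mpr ha)]
      ring
    have hfin : c' < F + ε := by
      rw [hc'val]
      have h1 : a⁻¹ * ∑ e, w e * |ψ (s e) - ψ (t e)| < a⁻¹ * u :=
        mul_lt_mul_of_pos_left hsep (inv_pos.mpr ha)
      have h2 : a⁻¹ * u < a⁻¹ * ((F + ε) * a) :=
        mul_lt_mul_of_pos_left hux (inv_pos.mpr ha)
      have h3 : a⁻¹ * ((F + ε) * a) = F + ε := by field_simp
      linarith
    have hlast := csInf_le hSbdd hc'S
    simp only [hεdef] at hfin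
    linarith
end

section
/- Let G be a finite connected weighted undirected graph, let μ, ν ∈ P(V) with μ ≠ ν, let 1 < p < ∞ and let q satisfy 1/p + 1/q = 1. Then C_p(μ,ν) = 1 / B_{w^{1−q},q}(μ,ν); that is, ( inf { (Σ_{{i,j}∈E} w_{ij}|φ_i − φ_j|^p)^{1/p} : φ ∈ ℝ^n, φᵀ(μ−ν) = 1 } ) · ( inf { (Σ_{e∈E} w_e^{1−q} |J_e|^q)^{1/q} : J ∈ ℝ^E, BJ = μ − ν } ) = 1. -/
open Matrix

/-- Bound on potential differences along a walk in the support graph. -/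
lemma walk_bound_aux {n N : ℕ} (s t : Fin N → Fin n) (φ : Fin n → ℝ) (R : ℝ)
    (hx : ∀ e, |φ (s e) - φ (t e)| ≤ R) :
    ∀ {u v : Fin n}
      (wlk : (SimpleGraph.fromRel fun i j => ∃ e, s e = i ∧ t e = j).Walk u v),
      |φ u - φ v| ≤ wlk.length * R := by
  intro u v wlk
  induction wlk with
  | nil => simp
  | @cons u u' v h wtail ih =>
    have hstep : |φ u - φ u'| ≤ R := by
      rw [SimpleGraph.fromRel_adj] at h
      obtain ⟨-, h | h⟩ := h
      · obtain ⟨e, he1, he2⟩ := h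
        rw [← he1, ← he2]; exact hx e
      · obtain ⟨e, he1, he2⟩ := h
        rw [← he1, ← he2, abs_sub_comm]; exact hx e
    calc |φ u - φ v| ≤ |φ u - φ u'| + |φ u' - φ v| := by
          have := abs_sub_le (φ u) (φ u') (φ v); linarith [abs_sub_le (φ u) (φ u') (φ v)]
      _ ≤ R + wtail.length * R := add_le_add hstep ih
      _ = (SimpleGraph.Walk.cons h wtail).length * R := by
          rw [SimpleGraph.Walk.length_cons]; push_cast; ring


/-- **gauge duality, `1 < p < ∞`.**
For a finite connected weighted undirected graph (vertices `Fin n`, edges indexed by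
`Fin N` with endpoints `s e ≠ t e`, positive weights `w e`, and node-edge oriented
incidence matrix `B` whose column at edge `e` is `e_{s e} - e_{t e}`), probability
measures `μ ≠ ν`, and conjugate exponents `1 < p, q < ∞` with `1/p + 1/q = 1`:
`C_p(μ,ν) · B_{w^{1-q},q}(μ,ν) = 1`, i.e.
`inf { (Σ_e w_e |φ_{s e} - φ_{t e}|^p)^{1/p} : φᵀ(μ-ν) = 1 }`
times
`inf { (Σ_e w_e^{1-q} |J_e|^q)^{1/q} : BJ = μ - ν }` equals `1`. -/
theorem p_conductance_beckmann_gauge_duality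
    (n N : ℕ) (s t : Fin N → Fin n) (w : Fin N → ℝ)
    (hw : ∀ e, 0 < w e) (hst : ∀ e, s e ≠ t e)
    (hconn : (SimpleGraph.fromRel fun i j => ∃ e, s e = i ∧ t e = j).Connected)
    (μ ν : Fin n → ℝ)
    (hμ : (∀ i, 0 ≤ μ i) ∧ ∑ i, μ i = 1)
    (hν : (∀ i, 0 ≤ ν i) ∧ ∑ i, ν i = 1)
    (hμν : μ ≠ ν)
    (p q : ℝ) (hp : 1 < p) (hpq : 1 / p + 1 / q = 1) :
    sInf {c : ℝ | ∃ φ : Fin n → ℝ, φ ⬝ᵥ (μ - ν) = 1 ∧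
        c = (∑ e, w e * |φ (s e) - φ (t e)| ^ p) ^ (1 / p)} *
    sInf {c : ℝ | ∃ J : Fin N → ℝ,
        (∀ v, (∑ e, J e * ((if s e = v then (1:ℝ) else 0) - (if t e = v then (1:ℝ) else 0)))
          = μ v - ν v) ∧
        c = (∑ e, w e ^ (1 - q) * |J e| ^ q) ^ (1 / q)} = 1 := by
  -- basic exponent facts
  have hp0 : (0:ℝ) < p := by linarith
  have hpne : p ≠ 0 := ne_of_gt hp0
  have hcj : Real.HolderConjugate p q := Real.holderConjugate_iff.mpr ⟨hp, by rw [← one_div, ← one_div]; exact hpq⟩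
  have hq1 : 1 < q := hcj.symm.lt
  have hq0 : (0:ℝ) < q := by linarith
  have hqne : q ≠ 0 := ne_of_gt hq0
  have hpq1 : (p - 1) * q = p := hcj.sub_one_mul_conj
  -- the difference of measures
  set δ : Fin n → ℝ := fun v => μ v - ν v with hδdef
  have hsum : ∑ v, δ v = 0 := by
    simp only [hδdef, Finset.sum_sub_distrib, hμ.2, hν.2, sub_self]
  have hdot : ∀ φ : Fin n → ℝ, φ ⬝ᵥ (μ - ν) = ∑ v, φ v * δ v := by
    intro φ; simp [dotProduct, hδdef]
  -- the energy
  set E : (Fin n → ℝ) → ℝ := fun φ => ∑ e, w e * |φ (s e) - φ (t e)| ^ p with hEdef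
  have hE0 : ∀ φ, 0 ≤ E φ := by
    intro φ
    exact Finset.sum_nonneg fun e _ =>
      mul_nonneg (hw e).le (Real.rpow_nonneg (abs_nonneg _) p)
  -- existence of a minimizer of E over the constraint set
  obtain ⟨φs, hφs, hmin⟩ : ∃ φs : Fin n → ℝ, (∑ v, φs v * δ v) = 1 ∧
      ∀ φ : Fin n → ℝ, (∑ v, φ v * δ v) = 1 → E φs ≤ E φ := by
    -- the vertex set is nonempty
    have hn : 0 < n := by
      rcases Nat.eq_zero_or_pos n with h | h
      · exfalso; subst h; simpa using hμ.2
      · exact h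
    set i0 : Fin n := ⟨0, hn⟩ with hi0
    -- δ is nonzero
    have hδne : ∃ v, δ v ≠ 0 := by
      by_contra h
      push_neg at h
      apply hμν
      funext v
      have := h v
      simpa [hδdef, sub_eq_zero] using this
    have hdd : 0 < ∑ v, δ v ^ 2 := by
      obtain ⟨v, hv⟩ := hδne
      exact Finset.sum_pos' (fun i _ => sq_nonneg _)
        ⟨v, Finset.mem_univ v, by positivity⟩
    set S2 : ℝ := ∑ v, δ v ^ 2 with hS2
    -- a feasible potential vanishing at i0
    set φ0 : Fin n → ℝ := fun v => δ v / S2 - δ i0 / S2 with hφ0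
    have hφ0feas : ∑ v, φ0 v * δ v = 1 := by
      have h1 : ∑ v, δ v / S2 * δ v = 1 := by
        have : ∀ v : Fin n, δ v / S2 * δ v = δ v ^ 2 / S2 := fun v => by ring
        rw [Finset.sum_congr rfl fun v _ => this v, ← Finset.sum_div, ← hS2,
          div_self hdd.ne']
      have h2 : ∑ v, δ i0 / S2 * δ v = 0 := by
        rw [← Finset.mul_sum, hsum, mul_zero]
      calc ∑ v, φ0 v * δ v = ∑ v, (δ v / S2 * δ v - δ i0 / S2 * δ v) :=
            Finset.sum_congr rfl fun v _ => by rw [hφ0]; ring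
        _ = 1 - 0 := by rw [Finset.sum_sub_distrib, h1, h2]
        _ = 1 := by ring
    have hφ0i0 : φ0 i0 = 0 := by simp [hφ0]
    -- uniform bound on edge differences for energies below E φ0
    set R : ℝ := ∑ e, (E φ0 / w e) ^ (1 / p) with hR
    have hR0 : 0 ≤ R :=
      Finset.sum_nonneg fun e _ => Real.rpow_nonneg (div_nonneg (hE0 φ0) (hw e).le) _
    have hxbound : ∀ φ : Fin n → ℝ, E φ ≤ E φ0 →
        ∀ e, |φ (s e) - φ (t e)| ≤ R := by
      intro φ hφ e
      have h1 : w e * |φ (s e) - φ (t e)| ^ p ≤ E φ0 :=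
        le_trans (Finset.single_le_sum
          (f := fun e' => w e' * |φ (s e') - φ (t e')| ^ p)
          (fun e' _ => mul_nonneg (hw e').le (Real.rpow_nonneg (abs_nonneg _) p))
          (Finset.mem_univ e)) hφ
      have h2 : |φ (s e) - φ (t e)| ^ p ≤ E φ0 / w e := by
        rw [le_div_iff₀ (hw e)]
        linarith [h1, mul_comm (w e) (|φ (s e) - φ (t e)| ^ p)]
      have h3 : |φ (s e) - φ (t e)| ≤ (E φ0 / w e) ^ (1 / p) := by
        have h4 : |φ (s e) - φ (t e)| = (|φ (s e) - φ (t e)| ^ p) ^ (1 / p) := by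
          rw [← Real.rpow_mul (abs_nonneg _), mul_one_div, div_self hpne, Real.rpow_one]
        rw [h4]
        exact Real.rpow_le_rpow (Real.rpow_nonneg (abs_nonneg _) _) h2 (by positivity)
      exact le_trans h3 (Finset.single_le_sum
        (f := fun e' => (E φ0 / w e') ^ (1 / p))
        (fun e' _ => Real.rpow_nonneg (div_nonneg (hE0 φ0) (hw e').le) _)
        (Finset.mem_univ e))
    -- walk-length bounds on vertex values
    have hlen : ∀ v : Fin n, ∃ L : ℕ, ∀ φ : Fin n → ℝ, φ i0 = 0 →
        (∀ e, |φ (s e) - φ (t e)| ≤ R) → |φ v| ≤ L * R := by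
      intro v
      obtain ⟨wlk⟩ := hconn.preconnected i0 v
      refine ⟨wlk.length, fun φ h0 hb => ?_⟩
      have := walk_bound_aux s t φ R hb wlk
      rwa [h0, zero_sub, abs_neg] at this
    choose len hlenspec using hlen
    set C : ℝ := (Finset.univ.sup len : ℕ) * R with hC
    set K : Set (Fin n → ℝ) :=
      {φ | (∑ v, φ v * δ v) = 1} ∩ ({φ | φ i0 = 0} ∩ {φ | E φ ≤ E φ0}) with hK
    have hφ0K : φ0 ∈ K := ⟨hφ0feas, hφ0i0, le_refl (E φ0)⟩
    have hcE : Continuous E := by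
      apply continuous_finset_sum
      intro e _
      apply Continuous.mul continuous_const
      have h1 : Continuous fun φ : Fin n → ℝ => φ (s e) - φ (t e) :=
        (continuous_apply _).sub (continuous_apply _)
      have h2 : Continuous fun y : ℝ => |y| ^ p := by
        rw [continuous_iff_continuousAt]
        intro a
        exact (Real.continuousAt_rpow_const _ _ (Or.inr hp0.le)).comp
          continuous_abs.continuousAt
      exact h2.comp h1
    have hKclosed : IsClosed K := by
      refine IsClosed.inter ?_ (IsClosed.inter ?_ ?_)
      · exact isClosed_eq (continuous_finset_sum _ fun v _ =>
          (continuous_apply v).mul continuous_const) continuous_const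
      · exact isClosed_eq (continuous_apply i0) continuous_const
      · exact isClosed_le hcE continuous_const
    have hKbounded : Bornology.IsBounded K := by
      apply (Metric.isBounded_closedBall (x := (0 : Fin n → ℝ)) (r := C)).subset
      rintro φ ⟨h1, h2, h3⟩
      have hb := hxbound φ h3
      rw [Metric.mem_closedBall, dist_zero_right]
      have hC0 : 0 ≤ C := mul_nonneg (Nat.cast_nonneg _) hR0
      rw [pi_norm_le_iff_of_nonneg hC0]
      intro v
      rw [Real.norm_eq_abs]
      calc |φ v| ≤ len v * R := hlenspec v φ h2 hb
        _ ≤ C := by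
          rw [hC]
          apply mul_le_mul_of_nonneg_right _ hR0
          exact_mod_cast Nat.cast_le.mpr (Finset.le_sup (Finset.mem_univ v))
    have hKcompact : IsCompact K :=
      Metric.isCompact_of_isClosed_isBounded hKclosed hKbounded
    obtain ⟨φs, hφsK, hφsmin⟩ :=
      hKcompact.exists_isMinOn ⟨φ0, hφ0K⟩ hcE.continuousOn
    rw [isMinOn_iff] at hφsmin
    refine ⟨φs, hφsK.1, ?_⟩
    intro φ hφ
    set ψ : Fin n → ℝ := fun v => φ v - φ i0 with hψ
    have hψfeas : ∑ v, ψ v * δ v = 1 := by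
      have : ∀ v : Fin n, ψ v * δ v = φ v * δ v - φ i0 * δ v := fun v => by
        rw [hψ]; ring
      rw [Finset.sum_congr rfl fun v _ => this v, Finset.sum_sub_distrib, hφ,
        ← Finset.mul_sum, hsum, mul_zero, sub_zero]
    have hψE : E ψ = E φ := by
      refine Finset.sum_congr rfl fun e _ => ?_
      congr 2
      rw [hψ]
      ring
    have hψ0 : ψ i0 = 0 := by rw [hψ]; ring
    by_cases hcase : E ψ ≤ E φ0
    · have hmem : ψ ∈ K := ⟨hψfeas, hψ0, hcase⟩
      have := hφsmin ψ hmem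
      rw [hψE] at this
      exact this
    · push_neg at hcase
      have h1 : E φs ≤ E φ0 := hφsmin φ0 hφ0K
      rw [← hψE]
      linarith
  -- nonemptiness of the vertex set
  have hn : 0 < n := by
    rcases Nat.eq_zero_or_pos n with h | h
    · exfalso; subst h
      simpa using hμ.2
    · exact h
  -- the minimum energy is positive
  have hEpos : 0 < E φs := by
    rcases (hE0 φs).lt_or_eq with h | h
    · exact h
    exfalso
    have hterm : ∀ e ∈ Finset.univ, w e * |φs (s e) - φs (t e)| ^ p = 0 := by
      rw [← Finset.sum_eq_zero_iff_of_nonneg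
        (fun e _ => mul_nonneg (hw e).le (Real.rpow_nonneg (abs_nonneg _) p))]
      exact h.symm
    have habs : ∀ e, |φs (s e) - φs (t e)| = 0 := by
      intro e
      have h1 := hterm e (Finset.mem_univ e)
      have h2 : |φs (s e) - φs (t e)| ^ p = 0 := by
        rcases mul_eq_zero.mp h1 with h2 | h2
        · exact absurd h2 (hw e).ne'
        · exact h2
      exact ((Real.rpow_eq_zero (abs_nonneg _) hpne).mp h2)
    have hconst : ∀ u v : Fin n, φs u = φs v := by
      intro u v
      obtain ⟨wlk⟩ := hconn.preconnected u v
      have := walk_bound_aux s t φs 0 (fun e => le_of_eq (habs e)) wlk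
      rw [mul_zero] at this
      have h2 := abs_nonneg (φs u - φs v)
      have : |φs u - φs v| = 0 := le_antisymm this h2
      have := abs_eq_zero.mp this
      linarith
    set u0 : Fin n := ⟨0, hn⟩
    have : (1:ℝ) = 0 := by
      rw [← hφs]
      calc ∑ v, φs v * δ v = ∑ v, φs u0 * δ v :=
            Finset.sum_congr rfl fun v _ => by rw [hconst v u0]
        _ = φs u0 * ∑ v, δ v := by rw [Finset.mul_sum]
        _ = 0 := by rw [hsum, mul_zero]
    norm_num at this
  set A : ℝ := E φs ^ (1 / p) with hAdef
  have hApos : 0 < A := Real.rpow_pos_of_pos hEpos _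
  -- swap identity
  have hswap : ∀ (J : Fin N → ℝ) (ψ : Fin n → ℝ),
      (∑ v, ψ v * (∑ e, J e * ((if s e = v then (1:ℝ) else 0) - (if t e = v then (1:ℝ) else 0))))
        = ∑ e, J e * (ψ (s e) - ψ (t e)) := by
    intro J ψ
    simp_rw [Finset.mul_sum]
    rw [Finset.sum_comm]
    refine Finset.sum_congr rfl fun e _ => ?_
    simp only [mul_sub, mul_ite, mul_one, mul_zero, Finset.sum_sub_distrib]
    rw [Finset.sum_ite_eq Finset.univ (s e) (fun v => ψ v * J e),
        Finset.sum_ite_eq Finset.univ (t e) (fun v => ψ v * J e)]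
    simp only [Finset.mem_univ, if_true]
    ring
  -- Euler–Lagrange: the optimal flow
  set x : Fin N → ℝ := fun e => φs (s e) - φs (t e) with hxdef
  set J : Fin N → ℝ := fun e => w e * |x e| ^ (p - 2) * x e / E φs with hJdef
  have habs1 : ∀ y : ℝ, |y| ^ (p - 2) * y * y = |y| ^ p := by
    intro y
    rcases eq_or_ne y 0 with rfl | hy
    · simp [Real.zero_rpow hpne]
    · have hay : |y| ≠ 0 := abs_ne_zero.mpr hy
      calc |y| ^ (p - 2) * y * y = |y| ^ (p - 2) * (|y| * |y|) := by
            rw [mul_assoc, abs_mul_abs_self]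
        _ = (|y| ^ (p - 2) * |y|) * |y| := by ring
        _ = |y| ^ (p - 1) * |y| := by
            rw [← Real.rpow_add_one hay (p - 2)]; congr 1; ring
        _ = |y| ^ p := by rw [← Real.rpow_add_one hay (p - 1)]; congr 1; ring
  have habs2 : ∀ y : ℝ, |y| ^ (p - 2) * |y| = |y| ^ (p - 1) := by
    intro y
    rcases eq_or_ne y 0 with rfl | hy
    · simp [Real.zero_rpow (show p - 1 ≠ 0 by intro h; linarith)]
    · have hay : |y| ≠ 0 := abs_ne_zero.mpr hy
      rw [← Real.rpow_add_one hay (p - 2)]; congr 1; ring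
  -- Euler–Lagrange: directional derivatives vanish
  have hEL : ∀ ψ : Fin n → ℝ, (∑ v, ψ v * δ v) = 0 →
      ∑ e, w e * (p * |x e| ^ (p - 2) * x e * (ψ (s e) - ψ (t e))) = 0 := by
    intro ψ hψ
    set y : Fin N → ℝ := fun e => ψ (s e) - ψ (t e) with hydef
    have hder : HasDerivAt (fun τ : ℝ => ∑ e, w e * |x e + τ * y e| ^ p)
        (∑ e, w e * (p * |x e| ^ (p - 2) * x e * y e)) 0 := by
      apply HasDerivAt.fun_sum
      intro e _
      have hin : HasDerivAt (fun τ : ℝ => x e + τ * y e) (y e) 0 := by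
        simpa using ((hasDerivAt_id (0:ℝ)).mul_const (y e)).const_add (x e)
      have habs := (hasDerivAt_abs_rpow (x e + 0 * y e) hp).comp 0 hin
      have habs' : HasDerivAt (fun τ : ℝ => |x e + τ * y e| ^ p)
          (p * |x e| ^ (p - 2) * x e * y e) 0 := by
        simp only [zero_mul, add_zero] at habs
        exact habs
      simpa [mul_assoc] using habs'.const_mul (w e)
    have hloc : IsLocalMin (fun τ : ℝ => ∑ e, w e * |x e + τ * y e| ^ p) 0 := by
      apply Filter.Eventually.of_forall
      intro τ
      have hfeas : (∑ v, (φs v + τ * ψ v) * δ v) = 1 := by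
        simp_rw [add_mul, Finset.sum_add_distrib]
        rw [hφs]
        simp_rw [mul_assoc]
        rw [← Finset.mul_sum, hψ, mul_zero, add_zero]
      have hEeq : ∀ σ : ℝ, E (fun v => φs v + σ * ψ v) =
          ∑ e, w e * |x e + σ * y e| ^ p := by
        intro σ
        refine Finset.sum_congr rfl fun e _ => ?_
        congr 2
        simp only [hxdef, hydef]
        ring
      have h1 := hmin (fun v => φs v + τ * ψ v) hfeas
      rw [hEeq τ] at h1
      have h0 : E φs = ∑ e, w e * |x e + (0:ℝ) * y e| ^ p := by
        rw [← hEeq 0]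
        refine Finset.sum_congr rfl fun e _ => by norm_num
      simp only [← h0]
      exact h1
    exact hloc.hasDerivAt_eq_zero hder
  -- the Lagrange multiplier identity
  have hg : ∀ v, (∑ e, (w e * |x e| ^ (p - 2) * x e) *
      ((if s e = v then (1:ℝ) else 0) - (if t e = v then (1:ℝ) else 0))) = E φs * δ v := by
    have hzero : ∀ ψ : Fin n → ℝ, (∑ v, ψ v * δ v) = 0 →
        ∑ e, (w e * |x e| ^ (p - 2) * x e) * (ψ (s e) - ψ (t e)) = 0 := by
      intro ψ hψ
      have h1 := hEL ψ hψ
      have h2 : ∑ e, w e * (p * |x e| ^ (p - 2) * x e * (ψ (s e) - ψ (t e)))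
          = p * ∑ e, (w e * |x e| ^ (p - 2) * x e) * (ψ (s e) - ψ (t e)) := by
        rw [Finset.mul_sum]
        exact Finset.sum_congr rfl fun e _ => by ring
      rw [h2] at h1
      exact (mul_eq_zero.mp h1).resolve_left hpne
    have hφsg : ∑ e, (w e * |x e| ^ (p - 2) * x e) * (φs (s e) - φs (t e)) = E φs := by
      refine Finset.sum_congr rfl fun e _ => ?_
      have := habs1 (x e)
      simp only [hxdef] at this ⊢
      calc w e * |φs (s e) - φs (t e)| ^ (p - 2) * (φs (s e) - φs (t e)) *
            (φs (s e) - φs (t e))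
          = w e * (|φs (s e) - φs (t e)| ^ (p - 2) * (φs (s e) - φs (t e)) *
            (φs (s e) - φs (t e))) := by ring
        _ = w e * |φs (s e) - φs (t e)| ^ p := by rw [this]
    intro v
    set ψ : Fin n → ℝ := fun u => (if u = v then (1:ℝ) else 0) - δ v * φs u with hψdef
    have hψδ : (∑ u, ψ u * δ u) = 0 := by
      simp_rw [hψdef, sub_mul, Finset.sum_sub_distrib, ite_mul, one_mul, zero_mul]
      rw [Finset.sum_ite_eq' Finset.univ v δ]
      simp_rw [mul_assoc]
      rw [← Finset.mul_sum, hφs, mul_one]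
      simp
    have h1 := hzero ψ hψδ
    have h2 : ∑ e, (w e * |x e| ^ (p - 2) * x e) * (ψ (s e) - ψ (t e))
        = (∑ e, (w e * |x e| ^ (p - 2) * x e) *
            ((if s e = v then (1:ℝ) else 0) - (if t e = v then (1:ℝ) else 0)))
          - δ v * ∑ e, (w e * |x e| ^ (p - 2) * x e) * (φs (s e) - φs (t e)) := by
      rw [Finset.mul_sum, ← Finset.sum_sub_distrib]
      refine Finset.sum_congr rfl fun e _ => ?_
      simp only [hψdef]
      have : (if s e = v then (1:ℝ) else 0) = (if s e = v then (1:ℝ) else 0) := rfl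
      by_cases h3 : s e = v <;> by_cases h4 : t e = v <;>
        simp [h3, h4] <;> ring
    rw [h2, hφsg] at h1
    linarith
  have hJfeas : ∀ v, (∑ e, J e * ((if s e = v then (1:ℝ) else 0)
      - (if t e = v then (1:ℝ) else 0))) = μ v - ν v := by
    intro v
    have h1 := hg v
    have h2 : ∑ e, J e * ((if s e = v then (1:ℝ) else 0) - (if t e = v then (1:ℝ) else 0))
        = (∑ e, (w e * |x e| ^ (p - 2) * x e) *
            ((if s e = v then (1:ℝ) else 0) - (if t e = v then (1:ℝ) else 0))) / E φs := by
      rw [Finset.sum_div]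
      exact Finset.sum_congr rfl fun e _ => by rw [hJdef]; ring
    rw [h2, h1, mul_comm, mul_div_assoc, div_self hEpos.ne', mul_one]
  have hJval : (∑ e, w e ^ (1 - q) * |J e| ^ q) ^ (1 / q) = A⁻¹ := by
    have hsum2 : (∑ e, w e ^ (1 - q) * |J e| ^ q) = E φs ^ (1 - q) := by
      have hterm : ∀ e, w e ^ (1 - q) * |J e| ^ q = w e * |x e| ^ p / E φs ^ q := by
        intro e
        have hJabs : |J e| = w e * |x e| ^ (p - 1) / E φs := by
          rw [hJdef]
          rw [abs_div, abs_of_pos hEpos, abs_mul, abs_mul,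
            abs_of_pos (hw e), abs_of_nonneg (Real.rpow_nonneg (abs_nonneg _) _),
            mul_assoc, habs2 (x e)]
        rw [hJabs, Real.div_rpow (mul_nonneg (hw e).le (Real.rpow_nonneg (abs_nonneg _) _))
            hEpos.le,
          Real.mul_rpow (hw e).le (Real.rpow_nonneg (abs_nonneg _) _),
          ← Real.rpow_mul (abs_nonneg (x e)), hpq1,
          ← mul_div_assoc, ← mul_assoc, ← Real.rpow_add (hw e)]
        norm_num
      have hExs : E φs = ∑ e, w e * |x e| ^ p := rfl
      calc (∑ e, w e ^ (1 - q) * |J e| ^ q) = ∑ e, w e * |x e| ^ p / E φs ^ q :=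
            Finset.sum_congr rfl fun e _ => hterm e
        _ = (∑ e, w e * |x e| ^ p) / E φs ^ q := by rw [← Finset.sum_div]
        _ = E φs / E φs ^ q := by rw [← hExs]
        _ = E φs ^ (1 - q) := by rw [Real.rpow_sub hEpos, Real.rpow_one]
    rw [hsum2, ← Real.rpow_mul hEpos.le]
    have hexp : (1 - q) * (1 / q) = -(1 / p) := by
      field_simp
      nlinarith [hpq1]
    rw [hexp, Real.rpow_neg hEpos.le, hAdef]
  -- Hölder: lower bound for Beckmann values
  have hHolder : ∀ J' : Fin N → ℝ,
      (∀ v, (∑ e, J' e * ((if s e = v then (1:ℝ) else 0)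
        - (if t e = v then (1:ℝ) else 0))) = μ v - ν v) →
      A⁻¹ ≤ (∑ e, w e ^ (1 - q) * |J' e| ^ q) ^ (1 / q) := by
    intro J' hJ'
    set c : ℝ := (∑ e, w e ^ (1 - q) * |J' e| ^ q) ^ (1 / q) with hcdef
    have hkey : ∑ e, J' e * (φs (s e) - φs (t e)) = 1 := by
      rw [← hswap J' φs]
      have h2 : ∀ v : Fin n, φs v *
          (∑ e, J' e * ((if s e = v then (1:ℝ) else 0) - (if t e = v then (1:ℝ) else 0)))
          = φs v * δ v := fun v => by rw [hJ' v]
      rw [Finset.sum_congr rfl fun v _ => h2 v, hφs]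
    set f : Fin N → ℝ := fun e => w e ^ (1 / p) * x e with hfdef
    set g : Fin N → ℝ := fun e => w e ^ (-(1 / p)) * J' e with hgdef
    have hfg : ∀ e, J' e * x e = f e * g e := by
      intro e
      have h1 : w e ^ (1 / p) * w e ^ (-(1 / p)) = 1 := by
        rw [← Real.rpow_add (hw e)]
        norm_num
      calc J' e * x e = (w e ^ (1 / p) * w e ^ (-(1 / p))) * (J' e * x e) := by
            rw [h1, one_mul]
        _ = f e * g e := by rw [hfdef, hgdef]; ring
    have hHold := Real.inner_le_Lp_mul_Lq Finset.univ f g hcj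
    have hf : (∑ e, |f e| ^ p) = E φs := by
      refine Finset.sum_congr rfl fun e _ => ?_
      rw [hfdef]
      simp only
      rw [abs_mul, abs_of_nonneg (Real.rpow_nonneg (hw e).le _),
        Real.mul_rpow (Real.rpow_nonneg (hw e).le _) (abs_nonneg _),
        ← Real.rpow_mul (hw e).le, one_div, inv_mul_cancel₀ hpne, Real.rpow_one]
    have hgq : (∑ e, |g e| ^ q) = ∑ e, w e ^ (1 - q) * |J' e| ^ q := by
      refine Finset.sum_congr rfl fun e _ => ?_
      rw [hgdef]
      simp only
      rw [abs_mul, abs_of_nonneg (Real.rpow_nonneg (hw e).le _),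
        Real.mul_rpow (Real.rpow_nonneg (hw e).le _) (abs_nonneg _),
        ← Real.rpow_mul (hw e).le]
      congr 2
      field_simp
      nlinarith [hpq1]
    have hle : (1:ℝ) ≤ A * c := by
      calc (1:ℝ) = ∑ e, J' e * x e := hkey.symm
        _ = ∑ e, f e * g e := Finset.sum_congr rfl fun e _ => hfg e
        _ ≤ (∑ e, |f e| ^ p) ^ (1 / p) * (∑ e, |g e| ^ q) ^ (1 / q) := hHold
        _ = A * c := by rw [hf, hgq, hAdef, hcdef]
    have hc0 : 0 ≤ c := Real.rpow_nonneg (Finset.sum_nonneg fun e _ =>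
      mul_nonneg (Real.rpow_nonneg (hw e).le _) (Real.rpow_nonneg (abs_nonneg _) _)) _
    rw [inv_eq_one_div, div_le_iff₀ hApos]
    nlinarith
  -- compute the two infima
  have hInf1 : sInf {c : ℝ | ∃ φ : Fin n → ℝ, φ ⬝ᵥ (μ - ν) = 1 ∧
      c = (∑ e, w e * |φ (s e) - φ (t e)| ^ p) ^ (1 / p)} = A := by
    apply le_antisymm
    · exact csInf_le ⟨A, fun c ⟨φ, h1, h2⟩ => by
        rw [h2]; exact Real.rpow_le_rpow (hE0 φs) (hmin φ (by rwa [hdot] at h1))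
          (by positivity)⟩ ⟨φs, by rwa [hdot], rfl⟩
    · exact le_csInf ⟨A, φs, by rwa [hdot], rfl⟩ fun c ⟨φ, h1, h2⟩ => by
        rw [h2]; exact Real.rpow_le_rpow (hE0 φs) (hmin φ (by rwa [hdot] at h1))
          (by positivity)
  have hInf2 : sInf {c : ℝ | ∃ J' : Fin N → ℝ,
      (∀ v, (∑ e, J' e * ((if s e = v then (1:ℝ) else 0)
        - (if t e = v then (1:ℝ) else 0))) = μ v - ν v) ∧
      c = (∑ e, w e ^ (1 - q) * |J' e| ^ q) ^ (1 / q)} = A⁻¹ := by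
    apply le_antisymm
    · exact csInf_le ⟨A⁻¹, fun c ⟨J', h1, h2⟩ => by rw [h2]; exact hHolder J' h1⟩
        ⟨J, hJfeas, hJval.symm⟩
    · exact le_csInf ⟨A⁻¹, J, hJfeas, hJval.symm⟩ fun c ⟨J', h1, h2⟩ => by
        rw [h2]; exact hHolder J' h1
  rw [hInf1, hInf2, mul_inv_cancel₀ (ne_of_gt hApos)]
end

section
/- Let G be a finite connected weighted undirected graph and let μ, ν ∈ P(V) with μ ≠ ν. Then C_1(μ,ν) = 1 / B_{w^{−1},∞}(μ,ν); that is, ( inf { Σ_{{i,j}∈E} w_{ij}|φ_i − φ_j| : φ ∈ ℝ^n, φᵀ(μ−ν) = 1 } ) · ( inf { max_{e∈E} w_e^{−1} |J_e| : J ∈ ℝ^E, BJ = μ − ν } ) = 1. -/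
open Matrix

section aux

lemma dot_inc (n N : ℕ) (s t : Fin N → Fin n) (φ : Fin n → ℝ) (J : Fin N → ℝ) :
    ∑ v, φ v * (∑ e, J e * ((if s e = v then (1:ℝ) else 0) - (if t e = v then 1 else 0)))
      = ∑ e, J e * (φ (s e) - φ (t e)) := by
  simp only [Finset.mul_sum]
  rw [Finset.sum_comm]
  refine Finset.sum_congr rfl fun e _ => ?_
  have : ∑ v, φ v * (J e * ((if s e = v then (1:ℝ) else 0) - (if t e = v then 1 else 0)))
      = J e * ∑ v, (φ v * (if s e = v then (1:ℝ) else 0) - φ v * (if t e = v then 1 else 0)) := by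
    rw [Finset.mul_sum]; refine Finset.sum_congr rfl fun v _ => by ring
  rw [this, Finset.sum_sub_distrib]
  simp only [mul_ite, mul_one, mul_zero]
  rw [Finset.sum_ite_eq Finset.univ (s e) φ, Finset.sum_ite_eq Finset.univ (t e) φ]
  simp

lemma sign_mul_self' (x : ℝ) : Real.sign x * x = |x| := by
  rcases lt_trichotomy x 0 with h | h | h
  · rw [Real.sign_of_neg h, abs_of_neg h]; ring
  · simp [h]
  · rw [Real.sign_of_pos h, abs_of_pos h]; ring

lemma abs_sign_le_one (x : ℝ) : |Real.sign x| ≤ 1 := by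
  rcases lt_trichotomy x 0 with h | h | h
  · rw [Real.sign_of_neg h]; norm_num
  · simp [h]
  · rw [Real.sign_of_pos h]; norm_num

end aux

lemma single_sub_mem_range (n N : ℕ) (s t : Fin N → Fin n)
    (hconn : (SimpleGraph.fromRel fun i j => ∃ e, s e = i ∧ t e = j).Connected)
    (i j : Fin n) :
    ∃ J : Fin N → ℝ, ∀ v, (∑ e, J e * ((if s e = v then (1:ℝ) else 0) - (if t e = v then 1 else 0)))
      = (if i = v then 1 else 0) - (if j = v then 1 else 0) := by
  obtain ⟨p⟩ := hconn i j
  induction p with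
  | nil => exact ⟨0, fun v => by simp⟩
  | @cons a b c h p ih =>
    obtain ⟨J', hJ'⟩ := ih
    rw [SimpleGraph.fromRel_adj] at h
    obtain ⟨hab, h | h⟩ := h
    · obtain ⟨e, he1, he2⟩ := h
      refine ⟨fun e' => J' e' + if e' = e then 1 else 0, fun v => ?_⟩
      simp only [add_mul, Finset.sum_add_distrib, hJ', ite_mul, one_mul, zero_mul]
      rw [Finset.sum_ite_eq' Finset.univ e
        (fun e' => (if s e' = v then (1:ℝ) else 0) - (if t e' = v then 1 else 0))]
      simp [he1, he2]
    · obtain ⟨e, he1, he2⟩ := h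
      refine ⟨fun e' => J' e' + if e' = e then -1 else 0, fun v => ?_⟩
      simp only [add_mul, Finset.sum_add_distrib, hJ', ite_mul, neg_mul, one_mul, zero_mul]
      rw [Finset.sum_ite_eq' Finset.univ e
        (fun e' => -((if s e' = v then (1:ℝ) else 0) - (if t e' = v then 1 else 0)))]
      simp [he1, he2]

lemma feasible_of_sum_zero (n N : ℕ) (s t : Fin N → Fin n)
    (hconn : (SimpleGraph.fromRel fun i j => ∃ e, s e = i ∧ t e = j).Connected)
    (u : Fin n → ℝ) (hu : ∑ i, u i = 0) :
    ∃ J : Fin N → ℝ, ∀ v, (∑ e, J e * ((if s e = v then (1:ℝ) else 0) - (if t e = v then 1 else 0)))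
      = u v := by
  have hne : Nonempty (Fin n) := hconn.nonempty
  obtain ⟨i₀⟩ := hne
  choose F hF using fun i => single_sub_mem_range n N s t hconn i i₀
  refine ⟨fun e => ∑ i, u i * F i e, fun v => ?_⟩
  have : (∑ e, (∑ i, u i * F i e) * ((if s e = v then (1:ℝ) else 0) - (if t e = v then 1 else 0)))
      = ∑ i, u i * (∑ e, F i e * ((if s e = v then (1:ℝ) else 0) - (if t e = v then 1 else 0))) := by
    simp only [Finset.sum_mul, Finset.mul_sum, mul_assoc]
    exact Finset.sum_comm
  rw [this]
  have h2 : ∀ i : Fin n, u i * (∑ e, F i e * ((if s e = v then (1:ℝ) else 0) - (if t e = v then 1 else 0)))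
      = u i * ((if i = v then (1:ℝ) else 0) - if i₀ = v then 1 else 0) := fun i => by rw [hF]
  rw [Finset.sum_congr rfl fun i _ => h2 i]
  simp only [mul_sub, Finset.sum_sub_distrib, ← Finset.sum_mul, hu, zero_mul, sub_zero,
    mul_ite, mul_one, mul_zero]
  rw [Finset.sum_ite_eq' Finset.univ v u]
  simp [hu]


section mainlemmas

variable (n N : ℕ) (s t : Fin N → Fin n) (w : Fin N → ℝ)

/-- The incidence linear map. -/
noncomputable def incL : (Fin N → ℝ) →ₗ[ℝ] (Fin n → ℝ) where
  toFun := fun J v => ∑ e, J e * ((if s e = v then (1:ℝ) else 0) - (if t e = v then 1 else 0))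
  map_add' := fun J J' => by
    funext v; simp [add_mul, Finset.sum_add_distrib]
  map_smul' := fun c J => by
    funext v; simp [Finset.mul_sum, mul_assoc]

end mainlemmas

lemma key_duality (n N : ℕ) (s t : Fin N → Fin n) (w : Fin N → ℝ)
    (hw : ∀ e, 0 < w e)
    (hN : Nonempty (Fin N))
    (u : Fin n → ℝ) (hune : u ≠ 0)
    (hfeas : ∃ J : Fin N → ℝ, incL n N s t J = u) :
    sInf {c : ℝ | ∃ φ : Fin n → ℝ, φ ⬝ᵥ u = 1 ∧
        c = ∑ e, w e * |φ (s e) - φ (t e)|} *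
    sInf {c : ℝ | ∃ J : Fin N → ℝ,
        (∀ v, (∑ e, J e * ((if s e = v then (1:ℝ) else 0) - (if t e = v then (1:ℝ) else 0)))
          = u v) ∧
        c = ⨆ e, (w e)⁻¹ * |J e|} = 1 := by
  classical
  obtain ⟨J₀, hJ₀⟩ := hfeas
  have hNe : (Finset.univ : Finset (Fin N)).Nonempty := Finset.univ_nonempty
  -- the ℓ∞-type gauge
  set g : (Fin N → ℝ) → ℝ := fun J => Finset.univ.sup' hNe (fun e => (w e)⁻¹ * |J e|) with hg
  have hgiSup : ∀ J : Fin N → ℝ, (⨆ e, (w e)⁻¹ * |J e|) = g J := fun J =>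
    (Finset.sup'_univ_eq_ciSup _).symm
  have hg_le : ∀ (J : Fin N → ℝ) (e : Fin N), (w e)⁻¹ * |J e| ≤ g J := fun J e =>
    Finset.le_sup' (fun e => (w e)⁻¹ * |J e|) (Finset.mem_univ e)
  have hg_sup_le : ∀ (J : Fin N → ℝ) (a : ℝ), (∀ e, (w e)⁻¹ * |J e| ≤ a) → g J ≤ a :=
    fun J a h => Finset.sup'_le _ _ fun e _ => h e
  have hg_abs : ∀ (J : Fin N → ℝ) (e : Fin N), |J e| ≤ w e * g J := by
    intro J e
    have h1 := hg_le J e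
    have h2 := mul_le_mul_of_nonneg_left h1 (le_of_lt (hw e))
    rwa [← mul_assoc, mul_inv_cancel₀ (ne_of_gt (hw e)), one_mul] at h2
  have hg_cont : Continuous g := by
    apply Continuous.finset_sup'_apply hNe
    intro e _
    exact continuous_const.mul ((continuous_apply e).abs)
  have hg_nonneg : ∀ J, 0 ≤ g J := by
    intro J
    obtain ⟨e⟩ := hN
    exact le_trans (mul_nonneg (inv_nonneg.mpr (hw e).le) (abs_nonneg _)) (hg_le J e)
  -- attainment of the min
  have hLcont : Continuous (incL n N s t) := (incL n N s t).continuous_of_finiteDimensional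
  set K : Set (Fin N → ℝ) := {J | incL n N s t J = u ∧ g J ≤ g J₀} with hK
  have hKcomp : IsCompact K := by
    have hsub : K ⊆ Set.pi Set.univ (fun e => Set.Icc (-(w e * g J₀)) (w e * g J₀)) := by
      intro J hJ e _
      rw [Set.mem_Icc, ← abs_le]
      exact le_trans (hg_abs J e) (mul_le_mul_of_nonneg_left hJ.2 (le_of_lt (hw e)))
    refine IsCompact.of_isClosed_subset (isCompact_univ_pi fun e => isCompact_Icc) ?_ hsub
    exact (isClosed_eq hLcont continuous_const).inter (isClosed_le hg_cont continuous_const)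
  obtain ⟨Jm, hJmK, hJmmin⟩ := hKcomp.exists_isMinOn ⟨J₀, hJ₀, le_rfl⟩ hg_cont.continuousOn
  set β : ℝ := g Jm with hβ
  have hmin : ∀ J : Fin N → ℝ, incL n N s t J = u → β ≤ g J := by
    intro J hJ
    rcases le_or_gt (g J) (g J₀) with h | h
    · exact hJmmin ⟨hJ, h⟩
    · exact le_trans (hJmmin (⟨hJ₀, le_rfl⟩ : J₀ ∈ K)) (le_of_lt h)
  have hβpos : 0 < β := by
    rcases eq_or_lt_of_le (hg_nonneg Jm) with h | h
    · exfalso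
      have hJm0 : Jm = 0 := by
        funext e
        have h2 := hg_abs Jm e
        have hb0 : β = 0 := h.symm
        rw [← hβ, hb0, mul_zero] at h2
        simpa [abs_nonpos_iff] using h2
      have h0 : incL n N s t Jm = u := hJmK.1
      rw [hJm0, map_zero] at h0
      exact hune h0.symm
    · exact h
  -- weak duality
  have hweak : ∀ φ : Fin n → ℝ, φ ⬝ᵥ u = 1 → 1 ≤ β * ∑ e, w e * |φ (s e) - φ (t e)| := by
    intro φ hφ
    have h1 : (1:ℝ) = ∑ e, Jm e * (φ (s e) - φ (t e)) := by
      calc (1:ℝ) = φ ⬝ᵥ u := hφ.symm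
        _ = ∑ v, φ v * (incL n N s t Jm) v := by rw [← hJmK.1]; rfl
        _ = ∑ e, Jm e * (φ (s e) - φ (t e)) := dot_inc n N s t φ Jm
    have h2 : ∑ e, Jm e * (φ (s e) - φ (t e)) ≤ ∑ e, (w e * β) * |φ (s e) - φ (t e)| := by
      refine le_trans (le_trans (le_abs_self _) (Finset.abs_sum_le_sum_abs _ _))
        (Finset.sum_le_sum fun e _ => ?_)
      rw [abs_mul]
      exact mul_le_mul_of_nonneg_right (hg_abs Jm e) (abs_nonneg _)
    rw [h1]
    refine le_trans h2 (le_of_eq ?_)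
    rw [Finset.mul_sum]
    exact Finset.sum_congr rfl fun e _ => by ring
  -- strong duality
  have hstrong : ∀ δ : ℝ, 0 < δ → δ < β →
      ∃ φ : Fin n → ℝ, φ ⬝ᵥ u = 1 ∧ ∑ e, w e * |φ (s e) - φ (t e)| ≤ (β - δ)⁻¹ := by
    intro δ hδ hδβ
    have hβδ : 0 < β - δ := by linarith
    set Ball : Set (Fin N → ℝ) :=
      Set.pi Set.univ (fun e => Set.Icc (-((β - δ) * w e)) ((β - δ) * w e)) with hBall
    have hBallc : IsCompact Ball := isCompact_univ_pi fun e => isCompact_Icc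
    have hBallconv : Convex ℝ Ball := convex_pi fun e _ => convex_Icc _ _
    set S : Set (Fin n → ℝ) := (incL n N s t) '' Ball with hS
    have hScomp : IsCompact S := hBallc.image hLcont
    have hSconv : Convex ℝ S := hBallconv.linear_image (incL n N s t)
    have huS : u ∉ S := by
      rintro ⟨J, hJB, hJu⟩
      rw [Set.mem_univ_pi] at hJB
      have hgJ : g J ≤ β - δ := by
        refine hg_sup_le J _ fun e => ?_
        have h1 : |J e| ≤ (β - δ) * w e := by
          rw [abs_le]
          have := hJB e
          rw [Set.mem_Icc] at this
          exact this
        calc (w e)⁻¹ * |J e| ≤ (w e)⁻¹ * ((β - δ) * w e) :=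
              mul_le_mul_of_nonneg_left h1 (inv_nonneg.mpr (hw e).le)
          _ = β - δ := by rw [mul_comm (β - δ) (w e), ← mul_assoc, inv_mul_cancel₀ (hw e).ne', one_mul]
      have := hmin J hJu
      linarith
    obtain ⟨f, r, hfa, hru⟩ := geometric_hahn_banach_closed_point hSconv hScomp.isClosed huS
    set φ : Fin n → ℝ := fun v => f (fun j => if v = j then (1:ℝ) else 0) with hφdef
    have hfx : ∀ x : Fin n → ℝ, f x = ∑ v, x v * φ v := by
      intro x
      conv_lhs => rw [pi_eq_sum_univ x]
      rw [map_sum]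
      exact Finset.sum_congr rfl fun v _ => by rw [ContinuousLinearMap.map_smul, smul_eq_mul]
    have hfL : ∀ J : Fin N → ℝ, f (incL n N s t J) = ∑ e, J e * (φ (s e) - φ (t e)) := by
      intro J
      rw [hfx]
      rw [show ∑ v, (incL n N s t J) v * φ v = ∑ v, φ v * (incL n N s t J) v from
        Finset.sum_congr rfl fun v _ => mul_comm _ _]
      exact dot_inc n N s t φ J
    set D : Fin N → ℝ := fun e => φ (s e) - φ (t e) with hD
    set Jx : Fin N → ℝ := fun e => ((β - δ) * w e) * Real.sign (D e) with hJx
    have hJxB : Jx ∈ Ball := by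
      rw [Set.mem_univ_pi]
      intro e
      rw [Set.mem_Icc, ← abs_le]
      calc |((β - δ) * w e) * Real.sign (D e)|
          = ((β - δ) * w e) * |Real.sign (D e)| := by
            rw [abs_mul, abs_of_nonneg (mul_nonneg hβδ.le (hw e).le)]
        _ ≤ ((β - δ) * w e) * 1 :=
            mul_le_mul_of_nonneg_left (abs_sign_le_one _)
              (mul_nonneg hβδ.le (hw e).le)
        _ = (β - δ) * w e := mul_one _
    have hkey : (β - δ) * (∑ e, w e * |D e|) < φ ⬝ᵥ u := by
      have h1 : f (incL n N s t Jx) < r := hfa _ ⟨Jx, hJxB, rfl⟩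
      have h2 : f (incL n N s t Jx) = (β - δ) * ∑ e, w e * |D e| := by
        rw [hfL, Finset.mul_sum]
        refine Finset.sum_congr rfl fun e _ => ?_
        have hs := sign_mul_self' (D e)
        calc Jx e * D e = ((β - δ) * w e) * (Real.sign (D e) * D e) := by rw [hJx]; ring
          _ = (β - δ) * (w e * |D e|) := by rw [hs]; ring
      have h3 : φ ⬝ᵥ u = f u := by
        rw [hfx u]
        exact Finset.sum_congr rfl fun v _ => mul_comm _ _
      linarith
    have hDnn : 0 ≤ ∑ e, w e * |D e| :=
      Finset.sum_nonneg fun e _ => mul_nonneg (hw e).le (abs_nonneg _)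
    have hp : 0 < φ ⬝ᵥ u := lt_of_le_of_lt (mul_nonneg hβδ.le hDnn) hkey
    refine ⟨(φ ⬝ᵥ u)⁻¹ • φ, ?_, ?_⟩
    · rw [smul_dotProduct, smul_eq_mul, inv_mul_cancel₀ hp.ne']
    · have heq : ∑ e, w e * |((φ ⬝ᵥ u)⁻¹ • φ) (s e) - ((φ ⬝ᵥ u)⁻¹ • φ) (t e)|
          = (φ ⬝ᵥ u)⁻¹ * ∑ e, w e * |D e| := by
        rw [Finset.mul_sum]
        refine Finset.sum_congr rfl fun e _ => ?_
        simp only [Pi.smul_apply, smul_eq_mul]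
        rw [show (φ ⬝ᵥ u)⁻¹ * φ (s e) - (φ ⬝ᵥ u)⁻¹ * φ (t e)
            = (φ ⬝ᵥ u)⁻¹ * (φ (s e) - φ (t e)) from by ring, abs_mul,
          abs_of_nonneg (inv_nonneg.mpr hp.le)]
        rw [hD]
        ring
      rw [heq]
      have h1 : ∑ e, w e * |D e| < (β - δ)⁻¹ * (φ ⬝ᵥ u) := by
        have h := mul_lt_mul_of_pos_left hkey (inv_pos.mpr hβδ)
        rwa [← mul_assoc, inv_mul_cancel₀ hβδ.ne', one_mul] at h
      have h2 : (φ ⬝ᵥ u)⁻¹ * ∑ e, w e * |D e|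
          < (φ ⬝ᵥ u)⁻¹ * ((β - δ)⁻¹ * (φ ⬝ᵥ u)) := mul_lt_mul_of_pos_left h1 (inv_pos.mpr hp)
      rw [mul_comm ((β - δ)⁻¹) (φ ⬝ᵥ u), ← mul_assoc, inv_mul_cancel₀ hp.ne', one_mul] at h2
      exact h2.le
  -- assembly
  set A : Set ℝ := {c : ℝ | ∃ φ : Fin n → ℝ, φ ⬝ᵥ u = 1 ∧
      c = ∑ e, w e * |φ (s e) - φ (t e)|} with hA
  set B : Set ℝ := {c : ℝ | ∃ J : Fin N → ℝ,
      (∀ v, (∑ e, J e * ((if s e = v then (1:ℝ) else 0) - (if t e = v then (1:ℝ) else 0)))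
        = u v) ∧ c = ⨆ e, (w e)⁻¹ * |J e|} with hB
  have hconstr : ∀ J : Fin N → ℝ,
      (∀ v, (∑ e, J e * ((if s e = v then (1:ℝ) else 0) - (if t e = v then (1:ℝ) else 0)))
        = u v) ↔ incL n N s t J = u :=
    fun J => ⟨fun h => funext h, fun h v => congrFun h v⟩
  have hβB : β ∈ B := ⟨Jm, (hconstr Jm).mpr hJmK.1, (hgiSup Jm).symm⟩
  have hBlb : ∀ c ∈ B, β ≤ c := by
    rintro c ⟨J, hJ, rfl⟩
    rw [hgiSup J]
    exact hmin J ((hconstr J).mp hJ)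
  have hJset : sInf B = β := le_antisymm (csInf_le ⟨β, hBlb⟩ hβB) (le_csInf ⟨β, hβB⟩ hBlb)
  have hΦlb : ∀ c ∈ A, β⁻¹ ≤ c := by
    rintro c ⟨φ, hφ1, rfl⟩
    have h1 := hweak φ hφ1
    have h2 : β⁻¹ * 1 ≤ β⁻¹ * (β * ∑ e, w e * |φ (s e) - φ (t e)|) :=
      mul_le_mul_of_nonneg_left h1 (inv_nonneg.mpr hβpos.le)
    rwa [mul_one, ← mul_assoc, inv_mul_cancel₀ hβpos.ne', one_mul] at h2
  have hΦne : A.Nonempty := by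
    obtain ⟨φ, hφ1, _⟩ := hstrong (β/2) (by positivity) (by linarith)
    exact ⟨_, φ, hφ1, rfl⟩
  have hΦinf : sInf A = β⁻¹ := by
    refine le_antisymm ?_ (le_csInf hΦne hΦlb)
    by_contra h
    push_neg at h
    have ha0 : 0 < sInf A := lt_trans (inv_pos.mpr hβpos) h
    have hainv : (sInf A)⁻¹ < β := by
      have h2 := inv_strictAnti₀ (inv_pos.mpr hβpos) h
      rwa [inv_inv] at h2
    have hainvpos : 0 < (sInf A)⁻¹ := inv_pos.mpr ha0
    set δ : ℝ := (β - (sInf A)⁻¹) / 2 with hδdef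
    have hδpos : 0 < δ := by rw [hδdef]; linarith
    have hδβ : δ < β := by rw [hδdef]; linarith
    obtain ⟨φ, hφ1, hφ2⟩ := hstrong δ hδpos hδβ
    have hlt : (β - δ)⁻¹ < sInf A := by
      have hgt : (sInf A)⁻¹ < β - δ := by rw [hδdef]; linarith
      have h2 := inv_strictAnti₀ hainvpos hgt
      rwa [inv_inv] at h2
    have hle : sInf A ≤ (β - δ)⁻¹ :=
      le_trans (csInf_le ⟨β⁻¹, hΦlb⟩ ⟨φ, hφ1, rfl⟩) hφ2
    linarith
  rw [hΦinf, hJset]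
  exact inv_mul_cancel₀ hβpos.ne'


/-- **gauge duality, `p = 1`.**
For a finite connected weighted undirected graph (vertices `Fin n`, edges indexed by
`Fin N` with endpoints `s e ≠ t e`, positive weights `w e`, and node-edge oriented
incidence matrix `B` whose column at edge `e` is `e_{s e} - e_{t e}`) and probability
measures `μ ≠ ν`: `C₁(μ,ν) · B_{w⁻¹,∞}(μ,ν) = 1`, i.e.
`inf { Σ_e w_e |φ_{s e} - φ_{t e}| : φᵀ(μ-ν) = 1 }`
times
`inf { max_e w_e⁻¹ |J_e| : BJ = μ - ν }` equals `1`. -/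
theorem one_conductance_beckmann_gauge_duality
    (n N : ℕ) (s t : Fin N → Fin n) (w : Fin N → ℝ)
    (hw : ∀ e, 0 < w e) (hst : ∀ e, s e ≠ t e)
    (hconn : (SimpleGraph.fromRel fun i j => ∃ e, s e = i ∧ t e = j).Connected)
    (μ ν : Fin n → ℝ)
    (hμ : (∀ i, 0 ≤ μ i) ∧ ∑ i, μ i = 1)
    (hν : (∀ i, 0 ≤ ν i) ∧ ∑ i, ν i = 1)
    (hμν : μ ≠ ν) :
    sInf {c : ℝ | ∃ φ : Fin n → ℝ, φ ⬝ᵥ (μ - ν) = 1 ∧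
        c = ∑ e, w e * |φ (s e) - φ (t e)|} *
    sInf {c : ℝ | ∃ J : Fin N → ℝ,
        (∀ v, (∑ e, J e * ((if s e = v then (1:ℝ) else 0) - (if t e = v then (1:ℝ) else 0)))
          = μ v - ν v) ∧
        c = ⨆ e, (w e)⁻¹ * |J e|} = 1 := by
  classical
  have hN : Nonempty (Fin N) := by
    by_contra hno
    have hsub : ∀ i j : Fin n, i = j := by
      intro i j
      obtain ⟨p⟩ := hconn i j
      cases p with
      | nil => rfl
      | cons h' p =>
        rw [SimpleGraph.fromRel_adj] at h'
        obtain ⟨-, h' | h'⟩ := h'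
        · obtain ⟨e, -⟩ := h'; exact absurd ⟨e⟩ hno
        · obtain ⟨e, -⟩ := h'; exact absurd ⟨e⟩ hno
    apply hμν
    funext i
    have huniv : (Finset.univ : Finset (Fin n)) = {i} :=
      Finset.eq_singleton_iff_unique_mem.mpr ⟨Finset.mem_univ i, fun j _ => hsub j i⟩
    have h1 : μ i = 1 := by rw [← hμ.2, huniv, Finset.sum_singleton]
    have h2 : ν i = 1 := by rw [← hν.2, huniv, Finset.sum_singleton]
    rw [h1, h2]
  have hu0 : ∑ v, (μ - ν) v = 0 := by
    simp [Pi.sub_apply, Finset.sum_sub_distrib, hμ.2, hν.2]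
  have hune : μ - ν ≠ 0 := sub_ne_zero.mpr hμν
  have hfeas : ∃ J : Fin N → ℝ, incL n N s t J = μ - ν := by
    obtain ⟨J, hJ⟩ := feasible_of_sum_zero n N s t hconn (μ - ν) hu0
    exact ⟨J, funext hJ⟩
  have h := key_duality n N s t w hw hN (μ - ν) hune hfeas
  simpa [Pi.sub_apply] using h
end

section
/- Let G be a finite connected weighted undirected graph and let μ, ν ∈ P(V) with μ ≠ ν. Then C_∞(μ,ν) = 1 / B_{w^{−1},1}(μ,ν); that is, ( inf { max_{{i,j}∈E} w_{ij}|φ_i − φ_j| : φ ∈ ℝ^n, φᵀ(μ−ν) = 1 } ) · ( inf { Σ_{e∈E} w_e^{−1} |J_e| : J ∈ ℝ^E, BJ = μ − ν } ) = 1. -/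
open Matrix

open Matrix Finset

noncomputable def Fmap {n N : ℕ} (s t : Fin N → Fin n) : (Fin N → ℝ) →ₗ[ℝ] (Fin n → ℝ) where
  toFun J v := ∑ e, J e * ((if s e = v then (1:ℝ) else 0) - (if t e = v then (1:ℝ) else 0))
  map_add' J K := by funext v; simp [add_mul, Finset.sum_add_distrib]
  map_smul' c J := by funext v; simp [Finset.mul_sum, mul_assoc]

lemma dot_Fmap {n N : ℕ} (s t : Fin N → Fin n) (φ : Fin n → ℝ) (J : Fin N → ℝ) :
    φ ⬝ᵥ (Fmap s t J) = ∑ e, J e * (φ (s e) - φ (t e)) := by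
  unfold Fmap dotProduct
  simp only [LinearMap.coe_mk, AddHom.coe_mk, Finset.mul_sum]
  rw [Finset.sum_comm]
  refine Finset.sum_congr rfl fun e _ => ?_
  have : ∀ x, φ x * (J e * ((if s e = x then (1:ℝ) else 0) - if t e = x then 1 else 0))
      = J e * ((if s e = x then φ x else 0) - (if t e = x then φ x else 0)) := by
    intro x; split_ifs <;> ring
  rw [Finset.sum_congr rfl fun x _ => this x, ← Finset.mul_sum]
  rw [Finset.sum_sub_distrib, Finset.sum_ite_eq Finset.univ (s e) φ,
    Finset.sum_ite_eq Finset.univ (t e) φ]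
  simp

lemma Fmap_single {n N : ℕ} (s t : Fin N → Fin n) (e : Fin N) (c : ℝ) :
    Fmap s t (Pi.single e c) = c • (Pi.single (s e) 1 - Pi.single (t e) (1:ℝ)) := by
  funext v
  simp only [Fmap, LinearMap.coe_mk, AddHom.coe_mk, Pi.smul_apply, Pi.sub_apply,
    Pi.single_apply, smul_eq_mul, ite_mul, zero_mul]
  rw [Finset.sum_ite_eq' Finset.univ e
    (fun e' => c * ((if s e' = v then (1:ℝ) else 0) - if t e' = v then 1 else 0))]
  simp [eq_comm]

lemma const_of_edges {n N : ℕ} {s t : Fin N → Fin n}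
    (hconn : (SimpleGraph.fromRel fun i j => ∃ e, s e = i ∧ t e = j).Connected)
    (φ : Fin n → ℝ) (h : ∀ e, φ (s e) = φ (t e)) (i j : Fin n) : φ i = φ j := by
  obtain ⟨wk⟩ := hconn.preconnected i j
  induction wk with
  | nil => rfl
  | cons adj p ih =>
    rw [SimpleGraph.fromRel_adj] at adj
    refine Eq.trans ?_ ih
    rcases adj.2 with ⟨e, he1, he2⟩ | ⟨e, he1, he2⟩
    · rw [← he1, ← he2]; exact h e
    · rw [← he1, ← he2]; exact (h e).symm

lemma single_sub_mem_range_s6 {n N : ℕ} {s t : Fin N → Fin n}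
    (hconn : (SimpleGraph.fromRel fun i j => ∃ e, s e = i ∧ t e = j).Connected)
    (i j : Fin n) :
    (Pi.single i 1 - Pi.single j (1:ℝ)) ∈ LinearMap.range (Fmap s t) := by
  obtain ⟨wk⟩ := hconn.preconnected i j
  induction wk with
  | nil => simp
  | @cons a b c adj p ih =>
    rw [SimpleGraph.fromRel_adj] at adj
    have hstep : (Pi.single a 1 - Pi.single b (1:ℝ)) ∈ LinearMap.range (Fmap s t) := by
      rcases adj.2 with ⟨e, he1, he2⟩ | ⟨e, he1, he2⟩
      · exact ⟨Pi.single e 1, by rw [Fmap_single, he1, he2]; simp⟩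
      · exact ⟨Pi.single e (-1), by rw [Fmap_single, he1, he2]; simp⟩
    have := Submodule.add_mem _ hstep ih
    simpa using this

lemma mem_range_of_sum_zero {n N : ℕ} {s t : Fin N → Fin n}
    (hconn : (SimpleGraph.fromRel fun i j => ∃ e, s e = i ∧ t e = j).Connected)
    (i0 : Fin n) (x : Fin n → ℝ) (hx : ∑ v, x v = 0) :
    x ∈ LinearMap.range (Fmap s t) := by
  have hxr : x = ∑ v, x v • (Pi.single v 1 - Pi.single i0 (1:ℝ)) := by
    funext u
    simp only [Finset.sum_apply, Pi.smul_apply, Pi.sub_apply, Pi.single_apply, smul_eq_mul,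
      mul_sub, Finset.sum_sub_distrib, ← Finset.sum_mul, hx]
    simp [Finset.sum_ite_eq, eq_comm]
  rw [hxr]
  exact Submodule.sum_mem _ fun v _ =>
    Submodule.smul_mem _ _ (single_sub_mem_range_s6 hconn v i0)

lemma Fmap_apply {n N : ℕ} (s t : Fin N → Fin n) (J : Fin N → ℝ) (v : Fin n) :
    Fmap s t J v = ∑ e, J e * ((if s e = v then (1:ℝ) else 0) - (if t e = v then (1:ℝ) else 0)) :=
  rfl

noncomputable def gcost {N : ℕ} (w J : Fin N → ℝ) : ℝ := ∑ e, (w e)⁻¹ * |J e|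

noncomputable def Lmax {n N : ℕ} (s t : Fin N → Fin n) (w : Fin N → ℝ) (φ : Fin n → ℝ) : ℝ :=
  ⨆ e, w e * |φ (s e) - φ (t e)|

lemma term_le_Lmax {n N : ℕ} (s t : Fin N → Fin n) (w : Fin N → ℝ) (φ : Fin n → ℝ) (e : Fin N) :
    w e * |φ (s e) - φ (t e)| ≤ Lmax s t w φ := by
  have := le_ciSup (f := fun e => w e * |φ (s e) - φ (t e)|)
    (Set.Finite.bddAbove (Set.finite_range _)) e
  exact this

lemma Lmax_nonneg {n N : ℕ} [Nonempty (Fin N)] (s t : Fin N → Fin n) (w : Fin N → ℝ)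
    (hw : ∀ e, 0 < w e) (φ : Fin n → ℝ) : 0 ≤ Lmax s t w φ := by
  obtain ⟨e⟩ := (inferInstance : Nonempty (Fin N))
  exact le_trans (mul_nonneg (hw e).le (abs_nonneg _)) (term_le_Lmax s t w φ e)

lemma edges_eq_of_Lmax_nonpos {n N : ℕ} (s t : Fin N → Fin n) (w : Fin N → ℝ) (φ : Fin n → ℝ)
    (hw : ∀ e, 0 < w e) (h : Lmax s t w φ ≤ 0) (e : Fin N) : φ (s e) = φ (t e) := by
  have h1 := (term_le_Lmax s t w φ e).trans h
  have h2 : |φ (s e) - φ (t e)| ≤ 0 := by nlinarith [hw e, abs_nonneg (φ (s e) - φ (t e))]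
  have h3 := abs_nonpos_iff.mp h2
  linarith

lemma dot_const_sum_zero {n : ℕ} (φ x : Fin n → ℝ) (i0 : Fin n) (hc : ∀ v, φ v = φ i0)
    (hx : ∑ v, x v = 0) : φ ⬝ᵥ x = 0 := by
  show (∑ v, φ v * x v) = 0
  calc ∑ v, φ v * x v = ∑ v, φ i0 * x v := Finset.sum_congr rfl fun v _ => by rw [hc v]
  _ = φ i0 * ∑ v, x v := (Finset.mul_sum _ _ _).symm
  _ = 0 := by rw [hx, mul_zero]

lemma weak_dual {n N : ℕ} (s t : Fin N → Fin n) (w : Fin N → ℝ) (hw : ∀ e, 0 < w e)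
    (φ : Fin n → ℝ) (J : Fin N → ℝ) :
    φ ⬝ᵥ (Fmap s t J) ≤ Lmax s t w φ * gcost w J := by
  rw [dot_Fmap]
  have key : ∀ e : Fin N, J e * (φ (s e) - φ (t e)) ≤ ((w e)⁻¹ * |J e|) * Lmax s t w φ := by
    intro e
    have hwne : w e ≠ 0 := (hw e).ne'
    have h1 : J e * (φ (s e) - φ (t e)) ≤ |J e| * |φ (s e) - φ (t e)| := by
      rw [← abs_mul]; exact le_abs_self _
    have h2 : ((w e)⁻¹ * |J e|) * (w e * |φ (s e) - φ (t e)|)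
        = |J e| * |φ (s e) - φ (t e)| := by
      field_simp
    calc J e * (φ (s e) - φ (t e)) ≤ |J e| * |φ (s e) - φ (t e)| := h1
    _ = ((w e)⁻¹ * |J e|) * (w e * |φ (s e) - φ (t e)|) := h2.symm
    _ ≤ ((w e)⁻¹ * |J e|) * Lmax s t w φ :=
        mul_le_mul_of_nonneg_left (term_le_Lmax s t w φ e)
          (mul_nonneg (inv_nonneg.mpr (hw e).le) (abs_nonneg _))
  calc ∑ e, J e * (φ (s e) - φ (t e))
      ≤ ∑ e, ((w e)⁻¹ * |J e|) * Lmax s t w φ := Finset.sum_le_sum fun e _ => key e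
  _ = Lmax s t w φ * gcost w J := by rw [← Finset.sum_mul, mul_comm]; rfl


/-- **gauge duality, `p = ∞`; relation to 1-Wasserstein.**
For a finite connected weighted undirected graph (vertices `Fin n`, edges indexed by
`Fin N` with endpoints `s e ≠ t e`, positive weights `w e`, and node-edge oriented
incidence matrix `B` whose column at edge `e` is `e_{s e} - e_{t e}`) and probability
measures `μ ≠ ν`: `C_∞(μ,ν) · B_{w⁻¹,1}(μ,ν) = 1`, i.e.
`inf { max_e w_e |φ_{s e} - φ_{t e}| : φᵀ(μ-ν) = 1 }`
times
`inf { Σ_e w_e⁻¹ |J_e| : BJ = μ - ν }` equals `1`. -/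
theorem infty_conductance_beckmann_gauge_duality
    (n N : ℕ) (s t : Fin N → Fin n) (w : Fin N → ℝ)
    (hw : ∀ e, 0 < w e) (hst : ∀ e, s e ≠ t e)
    (hconn : (SimpleGraph.fromRel fun i j => ∃ e, s e = i ∧ t e = j).Connected)
    (μ ν : Fin n → ℝ)
    (hμ : (∀ i, 0 ≤ μ i) ∧ ∑ i, μ i = 1)
    (hν : (∀ i, 0 ≤ ν i) ∧ ∑ i, ν i = 1)
    (hμν : μ ≠ ν) :
    sInf {c : ℝ | ∃ φ : Fin n → ℝ, φ ⬝ᵥ (μ - ν) = 1 ∧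
        c = ⨆ e, w e * |φ (s e) - φ (t e)|} *
    sInf {c : ℝ | ∃ J : Fin N → ℝ,
        (∀ v, (∑ e, J e * ((if s e = v then (1:ℝ) else 0) - (if t e = v then (1:ℝ) else 0)))
          = μ v - ν v) ∧
        c = ∑ e, (w e)⁻¹ * |J e|} = 1 := by
  classical
  obtain ⟨hμ0, hμ1⟩ := hμ
  obtain ⟨hν0, hν1⟩ := hν
  have hsum0 : ∑ v, (μ v - ν v) = 0 := by
    rw [Finset.sum_sub_distrib, hμ1, hν1]; ring
  have hex : ∃ v, μ v ≠ ν v := by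
    by_contra h
    push_neg at h
    exact hμν (funext h)
  obtain ⟨v0, hv0⟩ := hex
  -- a second, distinct vertex where μ ≠ ν would not be needed; just distinctness
  have hv1 : ∃ v1, v1 ≠ v0 := by
    by_contra h
    push_neg at h
    have hs : ∑ v, (μ v - ν v) = μ v0 - ν v0 :=
      Finset.sum_eq_single v0 (fun v _ hv => absurd (h v) hv)
        (fun h' => absurd (Finset.mem_univ v0) h')
    have : μ v0 - ν v0 = 0 := by rw [← hs, hsum0]
    exact hv0 (by linarith)
  obtain ⟨v1, hv1⟩ := hv1
  have hNn : Nonempty (Fin N) := by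
    obtain ⟨wk⟩ := hconn.preconnected v1 v0
    cases wk with
    | nil => exact absurd rfl hv1
    | cons adj p =>
      rw [SimpleGraph.fromRel_adj] at adj
      rcases adj.2 with ⟨e, _⟩ | ⟨e, _⟩ <;> exact ⟨e⟩
  haveI := hNn
  obtain ⟨e0⟩ := hNn
  -- a feasible flow
  obtain ⟨J0, hJ0⟩ := mem_range_of_sum_zero (s := s) (t := t) hconn v0 (μ - ν)
    (by simpa using hsum0)
  -- rewrite the second set
  have hset2 : {c : ℝ | ∃ J : Fin N → ℝ,
      (∀ v, (∑ e, J e * ((if s e = v then (1:ℝ) else 0) - (if t e = v then (1:ℝ) else 0)))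
        = μ v - ν v) ∧
      c = ∑ e, (w e)⁻¹ * |J e|}
      = {c : ℝ | ∃ J : Fin N → ℝ, Fmap s t J = μ - ν ∧ c = gcost w J} := by
    ext c
    constructor
    · rintro ⟨J, h1, h2⟩
      exact ⟨J, funext fun v => by rw [Fmap_apply, h1 v]; simp, h2⟩
    · rintro ⟨J, h1, h2⟩
      refine ⟨J, fun v => ?_, h2⟩
      have := congrFun h1 v
      rw [Fmap_apply] at this
      simpa using this
  rw [hset2]
  show sInf {c : ℝ | ∃ φ : Fin n → ℝ, φ ⬝ᵥ (μ - ν) = 1 ∧ c = Lmax s t w φ} *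
    sInf {c : ℝ | ∃ J : Fin N → ℝ, Fmap s t J = μ - ν ∧ c = gcost w J} = 1
  set S1 := {c : ℝ | ∃ φ : Fin n → ℝ, φ ⬝ᵥ (μ - ν) = 1 ∧ c = Lmax s t w φ} with hS1def
  set S2 := {c : ℝ | ∃ J : Fin N → ℝ, Fmap s t J = μ - ν ∧ c = gcost w J} with hS2def
  have hS2ne : S2.Nonempty := ⟨gcost w J0, J0, hJ0, rfl⟩
  set M : ℝ := ∑ e, w e with hMdef
  have hM : 0 < M := Finset.sum_pos (fun e _ => hw e) ⟨e0, Finset.mem_univ e0⟩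
  have hwM : ∀ e, w e ≤ M := fun e =>
    Finset.single_le_sum (fun e' _ => (hw e').le) (Finset.mem_univ e)
  have hc0 : 0 < |μ v0 - ν v0| / M :=
    div_pos (abs_pos.mpr (sub_ne_zero.mpr hv0)) hM
  have hS2lb : ∀ c ∈ S2, |μ v0 - ν v0| / M ≤ c := by
    rintro c ⟨J, hJ, rfl⟩
    have hJv := congrFun hJ v0
    simp only [Pi.sub_apply] at hJv
    have h1 : |μ v0 - ν v0| ≤ ∑ e, |J e| := by
      calc |μ v0 - ν v0|
          = |∑ e, J e * ((if s e = v0 then (1:ℝ) else 0) - (if t e = v0 then (1:ℝ) else 0))| := by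
            rw [← Fmap_apply, hJv]
      _ ≤ ∑ e, |J e * ((if s e = v0 then (1:ℝ) else 0) - (if t e = v0 then (1:ℝ) else 0))| :=
            Finset.abs_sum_le_sum_abs _ _
      _ ≤ ∑ e, |J e| := by
            refine Finset.sum_le_sum fun e _ => ?_
            rw [abs_mul]
            have hb : |((if s e = v0 then (1:ℝ) else 0) - (if t e = v0 then (1:ℝ) else 0))| ≤ 1 := by
              split_ifs <;> norm_num
            exact mul_le_of_le_one_right (abs_nonneg _) hb
    have h2 : ∑ e, |J e| ≤ M * gcost w J := by
      rw [gcost, Finset.mul_sum]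
      refine Finset.sum_le_sum fun e _ => ?_
      have hwne : w e ≠ 0 := (hw e).ne'
      calc |J e| = w e * ((w e)⁻¹ * |J e|) := by field_simp
      _ ≤ M * ((w e)⁻¹ * |J e|) := mul_le_mul_of_nonneg_right (hwM e)
            (mul_nonneg (inv_nonneg.mpr (hw e).le) (abs_nonneg _))
    rw [div_le_iff₀ hM]
    calc |μ v0 - ν v0| ≤ M * gcost w J := h1.trans h2
    _ = gcost w J * M := mul_comm _ _
  have hS2bdd : BddBelow S2 := ⟨_, hS2lb⟩
  have hBpos : 0 < sInf S2 := lt_of_lt_of_le hc0 (le_csInf hS2ne hS2lb)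
  -- S1 nonempty
  have hφ0 : (fun v => if v = v0 then (μ v0 - ν v0)⁻¹ else 0) ⬝ᵥ (μ - ν) = 1 := by
    have h1 : ∀ v, (if v = v0 then (μ v0 - ν v0)⁻¹ else 0) * (μ - ν) v
        = if v = v0 then (μ v0 - ν v0)⁻¹ * (μ v0 - ν v0) else 0 := by
      intro v; split_ifs with h <;> simp [h]
    show (∑ v, (if v = v0 then (μ v0 - ν v0)⁻¹ else 0) * (μ - ν) v) = 1
    rw [Finset.sum_congr rfl fun v _ => h1 v, Finset.sum_ite_eq' Finset.univ v0]
    simp [inv_mul_cancel₀ (sub_ne_zero.mpr hv0)]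
  have hS1ne : S1.Nonempty := ⟨_, _, hφ0, rfl⟩
  have hS1key : ∀ c ∈ S1, 1 / sInf S2 ≤ c := by
    rintro c ⟨φ, hφ, rfl⟩
    have hLpos : 0 < Lmax s t w φ := by
      rcases lt_or_ge 0 (Lmax s t w φ) with h | h
      · exact h
      · exfalso
        have hce : ∀ e, φ (s e) = φ (t e) := edges_eq_of_Lmax_nonpos s t w φ hw h
        have hc : ∀ v, φ v = φ v0 := fun v => const_of_edges hconn φ hce v v0
        have h0 : φ ⬝ᵥ (μ - ν) = 0 :=
          dot_const_sum_zero φ (μ - ν) v0 hc (by simpa using hsum0)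
        rw [hφ] at h0
        exact one_ne_zero h0
    have hle : ∀ c2 ∈ S2, 1 / Lmax s t w φ ≤ c2 := by
      rintro c2 ⟨J, hJ, rfl⟩
      have hw1 := weak_dual s t w hw φ J
      rw [hJ, hφ] at hw1
      rw [div_le_iff₀ hLpos]
      calc (1:ℝ) ≤ Lmax s t w φ * gcost w J := hw1
      _ = gcost w J * Lmax s t w φ := mul_comm _ _
    have h2 : 1 / Lmax s t w φ ≤ sInf S2 := le_csInf hS2ne hle
    rw [div_le_iff₀ hBpos]
    rw [div_le_iff₀ hLpos] at h2
    linarith [mul_comm (sInf S2) (Lmax s t w φ)]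
  have hS1bdd : BddBelow S1 := ⟨_, hS1key⟩
  have hApos : 0 < sInf S1 :=
    lt_of_lt_of_le (one_div_pos.mpr hBpos) (le_csInf hS1ne hS1key)
  have hgeq : 1 ≤ sInf S1 * sInf S2 := by
    have h1 : 1 / sInf S2 ≤ sInf S1 := le_csInf hS1ne hS1key
    calc (1:ℝ) = 1 / sInf S2 * sInf S2 := (one_div_mul_cancel hBpos.ne').symm
    _ ≤ sInf S1 * sInf S2 := mul_le_mul_of_nonneg_right h1 hBpos.le
  -- strong duality
  have hstrong : ∀ r : ℝ, 0 < r → r < sInf S2 → sInf S1 < 1 / r := by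
    intro r hr hrB
    have hKconv : Convex ℝ {J : Fin N → ℝ | gcost w J ≤ r} := by
      intro J1 h1 J2 h2 a b ha hb hab
      show gcost w (a • J1 + b • J2) ≤ r
      have hsub : gcost w (a • J1 + b • J2) ≤ a * gcost w J1 + b * gcost w J2 := by
        rw [gcost, gcost, gcost, Finset.mul_sum, Finset.mul_sum, ← Finset.sum_add_distrib]
        refine Finset.sum_le_sum fun e _ => ?_
        have habs : |a * J1 e + b * J2 e| ≤ a * |J1 e| + b * |J2 e| := by
          calc |a * J1 e + b * J2 e| ≤ |a * J1 e| + |b * J2 e| := abs_add_le _ _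
          _ = a * |J1 e| + b * |J2 e| := by
              rw [abs_mul, abs_mul, abs_of_nonneg ha, abs_of_nonneg hb]
        calc (w e)⁻¹ * |(a • J1 + b • J2) e| = (w e)⁻¹ * |a * J1 e + b * J2 e| := by
              simp [Pi.add_apply, Pi.smul_apply, smul_eq_mul]
        _ ≤ (w e)⁻¹ * (a * |J1 e| + b * |J2 e|) :=
              mul_le_mul_of_nonneg_left habs (inv_nonneg.mpr (hw e).le)
        _ = a * ((w e)⁻¹ * |J1 e|) + b * ((w e)⁻¹ * |J2 e|) := by ring
      have hJ1 : gcost w J1 ≤ r := h1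
      have hJ2 : gcost w J2 ≤ r := h2
      calc gcost w (a • J1 + b • J2) ≤ a * gcost w J1 + b * gcost w J2 := hsub
      _ ≤ a * r + b * r := add_le_add (mul_le_mul_of_nonneg_left hJ1 ha)
            (mul_le_mul_of_nonneg_left hJ2 hb)
      _ = r := by rw [← add_mul, hab, one_mul]
    have hgc : Continuous (gcost w) := by
      unfold gcost
      exact continuous_finset_sum _ fun e _ => continuous_const.mul (continuous_apply e).abs
    have hKcl : IsClosed {J : Fin N → ℝ | gcost w J ≤ r} :=
      isClosed_le hgc continuous_const
    have hKsub : {J : Fin N → ℝ | gcost w J ≤ r} ⊆ Metric.closedBall 0 (M * r) := by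
      intro J hJ
      rw [Metric.mem_closedBall, dist_zero_right]
      rw [pi_norm_le_iff_of_nonneg (mul_nonneg hM.le hr.le)]
      intro e
      rw [Real.norm_eq_abs]
      have hwne : w e ≠ 0 := (hw e).ne'
      have h1 : (w e)⁻¹ * |J e| ≤ gcost w J :=
        Finset.single_le_sum (fun e' _ => mul_nonneg (inv_nonneg.mpr (hw e').le) (abs_nonneg _)) (Finset.mem_univ e)
      have h2 : (w e)⁻¹ * |J e| ≤ r := le_trans h1 hJ
      have h3 : |J e| ≤ w e * r := by
        have h4 := mul_le_mul_of_nonneg_left h2 (hw e).le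
        rwa [show w e * ((w e)⁻¹ * |J e|) = |J e| from by field_simp] at h4
      exact le_trans h3 (mul_le_mul_of_nonneg_right (hwM e) hr.le)
    have hKcomp : IsCompact {J : Fin N → ℝ | gcost w J ≤ r} :=
      IsCompact.of_isClosed_subset (isCompact_closedBall 0 (M * r)) hKcl hKsub
    have hDconv : Convex ℝ ((Fmap s t) '' {J : Fin N → ℝ | gcost w J ≤ r}) :=
      hKconv.linear_image (Fmap s t)
    have hDcl : IsClosed ((Fmap s t) '' {J : Fin N → ℝ | gcost w J ≤ r}) :=
      (hKcomp.image ((Fmap s t).continuous_of_finiteDimensional)).isClosed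
    have hnmem : (μ - ν) ∉ (Fmap s t) '' {J : Fin N → ℝ | gcost w J ≤ r} := by
      rintro ⟨J, hJK, hJeq⟩
      have h1 : sInf S2 ≤ gcost w J := csInf_le hS2bdd ⟨J, hJeq, rfl⟩
      have h2 : gcost w J ≤ r := hJK
      linarith
    obtain ⟨f, u, hfu, hux⟩ := geometric_hahn_banach_closed_point hDconv hDcl hnmem
    obtain ⟨φ, hfdot⟩ : ∃ φ : Fin n → ℝ, ∀ x : Fin n → ℝ, f x = φ ⬝ᵥ x := by
      refine ⟨fun v => f (fun j => if v = j then (1:ℝ) else 0), fun x => ?_⟩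
      calc f x = f (∑ v, x v • fun j => if v = j then (1:ℝ) else 0) := by
            rw [← pi_eq_sum_univ x]
      _ = ∑ v, x v • f (fun j => if v = j then (1:ℝ) else 0) := by
            rw [map_sum]
            exact Finset.sum_congr rfl fun v _ => map_smul f _ _
      _ = _ := by simp [dotProduct, mul_comm]
    have hu0 : 0 < u := by
      have h0D := hfu 0 ⟨0, by simp [gcost]; exact hr.le, map_zero _⟩
      simpa using h0D
    have hedge : ∀ e, r * (w e * |φ (s e) - φ (t e)|) < u := by
      intro e
      have hwne : w e ≠ 0 := (hw e).ne'
      have key : ∀ c : ℝ, |c| ≤ r * w e → f (Fmap s t (Pi.single e c)) < u := by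
        intro c hc
        refine hfu _ ⟨Pi.single e c, ?_, rfl⟩
        show gcost w (Pi.single e c) ≤ r
        have hg : gcost w (Pi.single e c) = (w e)⁻¹ * |c| := by
          rw [gcost]
          rw [Finset.sum_eq_single e
            (fun e' _ hne => by rw [Pi.single_eq_of_ne hne]; simp)
            (fun h => absurd (Finset.mem_univ e) h)]
          rw [Pi.single_eq_same]
        rw [hg]
        calc (w e)⁻¹ * |c| ≤ (w e)⁻¹ * (r * w e) :=
              mul_le_mul_of_nonneg_left hc (inv_nonneg.mpr (hw e).le)
        _ = r := by field_simp
      have hval : ∀ c : ℝ, f (Fmap s t (Pi.single e c)) = c * (φ (s e) - φ (t e)) := by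
        intro c
        rw [hfdot, dot_Fmap]
        rw [Finset.sum_eq_single e
          (fun e' _ hne => by rw [Pi.single_eq_of_ne hne, zero_mul])
          (fun h => absurd (Finset.mem_univ e) h), Pi.single_eq_same]
      have h1 := key (r * w e) (le_of_eq (abs_of_nonneg (mul_nonneg hr.le (hw e).le)))
      have h2 := key (-(r * w e)) (by rw [abs_neg]; exact le_of_eq (abs_of_nonneg (mul_nonneg hr.le (hw e).le)))
      rw [hval] at h1 h2
      have h3 : (r * w e) * |φ (s e) - φ (t e)| < u := by
        rcases abs_cases (φ (s e) - φ (t e)) with ⟨h4, _⟩ | ⟨h4, _⟩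
        · rw [h4]; exact h1
        · rw [h4, mul_neg, ← neg_mul]; exact h2
      calc r * (w e * |φ (s e) - φ (t e)|) = (r * w e) * |φ (s e) - φ (t e)| := by ring
      _ < u := h3
    have hud : u < φ ⬝ᵥ (μ - ν) := by rw [← hfdot]; exact hux
    have hdpos : 0 < φ ⬝ᵥ (μ - ν) := lt_trans hu0 hud
    have hLle : r * Lmax s t w φ ≤ u := by
      have hL : Lmax s t w φ ≤ u / r := by
        refine ciSup_le fun e => ?_
        rw [le_div_iff₀ hr]
        have := hedge e
        nlinarith
      calc r * Lmax s t w φ ≤ r * (u / r) := mul_le_mul_of_nonneg_left hL hr.le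
      _ = u := by field_simp
    have hLpos : 0 < Lmax s t w φ := by
      rcases lt_or_ge 0 (Lmax s t w φ) with h | h
      · exact h
      · exfalso
        have hce : ∀ e, φ (s e) = φ (t e) := edges_eq_of_Lmax_nonpos s t w φ hw h
        have hc : ∀ v, φ v = φ v0 := fun v => const_of_edges hconn φ hce v v0
        have h0 : φ ⬝ᵥ (μ - ν) = 0 :=
          dot_const_sum_zero φ (μ - ν) v0 hc (by simpa using hsum0)
        rw [h0] at hdpos
        exact lt_irrefl 0 hdpos
    set d := φ ⬝ᵥ (μ - ν) with hd
    have hψdot : (fun v => φ v / d) ⬝ᵥ (μ - ν) = 1 := by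
      show (∑ v, φ v / d * (μ - ν) v) = 1
      have : ∑ v, φ v / d * (μ - ν) v = (∑ v, φ v * (μ - ν) v) / d := by
        rw [Finset.sum_div]
        exact Finset.sum_congr rfl fun v _ => by ring
      rw [this]
      have hdd : (∑ v, φ v * (μ - ν) v) = d := rfl
      rw [hdd, div_self hdpos.ne']
    have hmem : Lmax s t w (fun v => φ v / d) ∈ S1 := ⟨_, hψdot, rfl⟩
    have hψle : Lmax s t w (fun v => φ v / d) ≤ Lmax s t w φ / d := by
      refine ciSup_le fun e => ?_
      have h1 := term_le_Lmax s t w φ e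
      have h2 : w e * |φ (s e) / d - φ (t e) / d| = (w e * |φ (s e) - φ (t e)|) / d := by
        rw [div_sub_div_same, abs_div, abs_of_pos hdpos]
        ring
      rw [h2]
      exact (div_le_div_iff_of_pos_right hdpos).mpr h1
    have hfin : Lmax s t w φ / d < 1 / r := by
      rw [div_lt_div_iff₀ hdpos hr]
      nlinarith [hLle, hud]
    calc sInf S1 ≤ Lmax s t w (fun v => φ v / d) := csInf_le hS1bdd hmem
    _ ≤ Lmax s t w φ / d := hψle
    _ < 1 / r := hfin
  have hleq : sInf S1 * sInf S2 ≤ 1 := by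
    by_contra hcon
    push_neg at hcon
    have h1 : 1 / sInf S1 < sInf S2 := by
      rw [div_lt_iff₀ hApos]
      linarith [mul_comm (sInf S1) (sInf S2)]
    obtain ⟨r, hr1, hr2⟩ := exists_between h1
    have hr0 : 0 < r := lt_trans (one_div_pos.mpr hApos) hr1
    have h2 := hstrong r hr0 hr2
    have h3 : 1 / r < sInf S1 := by
      rw [div_lt_iff₀ hr0]
      rw [div_lt_iff₀ hApos] at hr1
      linarith [mul_comm r (sInf S1)]
    linarith
  linarith
end

section
/- Let G be a finite connected weighted undirected graph with Laplacian L, and let μ, ν ∈ P(V) with μ ≠ ν. Then C_2(μ,ν)² = 1 / ( (μ−ν)ᵀ L† (μ−ν) ); that is, ( inf { Σ_{{i,j}∈E} w_{ij}(φ_i − φ_j)² : φ ∈ ℝ^n, φᵀ(μ−ν) = 1 } ) · ( (μ−ν)ᵀ L† (μ−ν) ) = 1. -/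
open Matrix

/-- **2-conductance and effective resistance.**
Let `W` be the symmetric weighted adjacency matrix (nonnegative entries, zero diagonal)
of a finite connected weighted undirected graph on vertices `Fin n` (edges are the pairs
`{i,j}` with `W i j ≠ 0`), let `L = D - W` be its Laplacian, and let `Ldag` be the
Moore–Penrose pseudoinverse of `L` (characterized by the four Penrose equations).
For probability measures `μ ≠ ν` on the vertices,
`C₂(μ,ν)² = 1 / ((μ-ν)ᵀ L† (μ-ν))`, i.e.
`inf { Σ_{{i,j}∈E} w_{ij} (φ_i - φ_j)² : φᵀ(μ-ν) = 1 } · ((μ-ν)ᵀ L† (μ-ν)) = 1`. -/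
theorem two_conductance_sq_eq_inv_effective_resistance
    (n : ℕ) (W : Matrix (Fin n) (Fin n) ℝ)
    (hWsymm : W.IsSymm) (hWnonneg : ∀ i j, 0 ≤ W i j) (hWdiag : ∀ i, W i i = 0)
    (hconn : (SimpleGraph.fromRel fun i j => W i j ≠ 0).Connected)
    (L : Matrix (Fin n) (Fin n) ℝ)
    (hL : L = Matrix.diagonal (fun i => ∑ j, W i j) - W)
    (Ldag : Matrix (Fin n) (Fin n) ℝ)
    (hpen1 : L * Ldag * L = L) (hpen2 : Ldag * L * Ldag = Ldag)
    (hpen3 : (L * Ldag)ᵀ = L * Ldag) (hpen4 : (Ldag * L)ᵀ = Ldag * L)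
    (μ ν : Fin n → ℝ)
    (hμ : (∀ i, 0 ≤ μ i) ∧ ∑ i, μ i = 1)
    (hν : (∀ i, 0 ≤ ν i) ∧ ∑ i, ν i = 1)
    (hμν : μ ≠ ν) :
    sInf {c : ℝ | ∃ φ : Fin n → ℝ, φ ⬝ᵥ (μ - ν) = 1 ∧
        c = ∑ i, ∑ j, if i < j then W i j * (φ i - φ j) ^ 2 else 0} *
      ((μ - ν) ⬝ᵥ Ldag.mulVec (μ - ν)) = 1 := by
  have hWs : ∀ i j, W i j = W j i := fun i j => (hWsymm.apply i j).symm
  have hLsym : Lᵀ = L := by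
    rw [hL, Matrix.transpose_sub, Matrix.diagonal_transpose, hWsymm]
  -- the quadratic form identity
  have hquad : ∀ φ : Fin n → ℝ,
      (∑ i, ∑ j, if i < j then W i j * (φ i - φ j) ^ 2 else 0) = φ ⬝ᵥ L *ᵥ φ := by
    intro φ
    have hswap : (∑ i, ∑ j, if i < j then W i j * (φ i - φ j) ^ 2 else 0)
        = ∑ i, ∑ j, if j < i then W i j * (φ i - φ j) ^ 2 else 0 := by
      rw [Finset.sum_comm]
      refine Finset.sum_congr rfl fun i _ => Finset.sum_congr rfl fun j _ => ?_
      rw [hWs i j]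
      ring_nf
    have h2 : (∑ i, ∑ j, if i < j then W i j * (φ i - φ j) ^ 2 else 0) * 2
        = ∑ i, ∑ j, W i j * (φ i - φ j) ^ 2 := by
      have e : (∑ i, ∑ j, if i < j then W i j * (φ i - φ j) ^ 2 else 0) * 2
          = (∑ i, ∑ j, if i < j then W i j * (φ i - φ j) ^ 2 else 0)
            + ∑ i, ∑ j, if j < i then W i j * (φ i - φ j) ^ 2 else 0 := by
        rw [← hswap]; ring
      rw [e, ← Finset.sum_add_distrib]
      refine Finset.sum_congr rfl fun i _ => ?_
      rw [← Finset.sum_add_distrib]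
      refine Finset.sum_congr rfl fun j _ => ?_
      rcases lt_trichotomy i j with h | h | h
      · simp [h, not_lt_of_gt h]
      · simp [h, hWdiag]
      · simp [h, not_lt_of_gt h]
    have hd : ∀ i, (L *ᵥ φ) i = (∑ j, W i j) * φ i - ∑ j, W i j * φ j := by
      intro i
      rw [hL]
      simp [Matrix.mulVec, dotProduct, Matrix.sub_apply, Matrix.diagonal,
        sub_mul, Finset.sum_sub_distrib, Finset.sum_ite_eq, Finset.mul_sum]
    have hA : φ ⬝ᵥ L *ᵥ φ = (∑ i, ∑ j, W i j * φ i ^ 2) - ∑ i, ∑ j, W i j * (φ i * φ j) := by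
      rw [dotProduct, ← Finset.sum_sub_distrib]
      refine Finset.sum_congr rfl fun i _ => ?_
      rw [hd i, mul_sub]
      congr 1
      · rw [Finset.sum_mul, Finset.mul_sum]
        exact Finset.sum_congr rfl fun j _ => by ring
      · rw [Finset.mul_sum]
        exact Finset.sum_congr rfl fun j _ => by ring
    have hswap2 : ∑ i, ∑ j, W i j * φ j ^ 2 = ∑ i, ∑ j, W i j * φ i ^ 2 := by
      rw [Finset.sum_comm]
      exact Finset.sum_congr rfl fun i _ => Finset.sum_congr rfl fun j _ => by rw [hWs i j]
    have hsplit : ∑ i, ∑ j, W i j * (φ i - φ j) ^ 2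
        = ((∑ i, ∑ j, W i j * φ i ^ 2) + ∑ i, ∑ j, W i j * φ j ^ 2)
          - 2 * ∑ i, ∑ j, W i j * (φ i * φ j) := by
      rw [← Finset.sum_add_distrib, Finset.mul_sum, ← Finset.sum_sub_distrib]
      refine Finset.sum_congr rfl fun i _ => ?_
      rw [← Finset.sum_add_distrib, Finset.mul_sum, ← Finset.sum_sub_distrib]
      exact Finset.sum_congr rfl fun j _ => by ring
    rw [hswap2] at hsplit
    linarith
  -- positivity of the quadratic form
  have hpos : ∀ φ : Fin n → ℝ, 0 ≤ φ ⬝ᵥ L *ᵥ φ := by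
    intro φ
    rw [← hquad]
    refine Finset.sum_nonneg fun i _ => Finset.sum_nonneg fun j _ => ?_
    split
    · exact mul_nonneg (hWnonneg i j) (sq_nonneg _)
    · exact le_refl 0
  -- symmetry of the bilinear form
  have hsymB : ∀ u v : Fin n → ℝ, u ⬝ᵥ L *ᵥ v = v ⬝ᵥ L *ᵥ u := by
    intro u v
    rw [Matrix.dotProduct_mulVec, ← Matrix.mulVec_transpose, hLsym, dotProduct_comm]
  -- Cauchy–Schwarz for the PSD form
  have hCS : ∀ u v : Fin n → ℝ, (u ⬝ᵥ L *ᵥ v) ^ 2 ≤ (u ⬝ᵥ L *ᵥ u) * (v ⬝ᵥ L *ᵥ v) := by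
    intro u v
    have hdis : discrim (v ⬝ᵥ L *ᵥ v) (2 * (u ⬝ᵥ L *ᵥ v)) (u ⬝ᵥ L *ᵥ u) ≤ 0 := by
      apply discrim_le_zero
      intro t
      have h := hpos (u + t • v)
      have hexp : (u + t • v) ⬝ᵥ L *ᵥ (u + t • v)
          = (v ⬝ᵥ L *ᵥ v) * (t * t) + 2 * (u ⬝ᵥ L *ᵥ v) * t + u ⬝ᵥ L *ᵥ u := by
        simp only [Matrix.mulVec_add, Matrix.mulVec_smul, add_dotProduct,
          dotProduct_add, dotProduct_smul, smul_dotProduct,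
          smul_eq_mul]
        rw [hsymB v u]
        ring
      rw [hexp] at h
      linarith
    rw [discrim] at hdis
    nlinarith
  -- kernel of L consists of constant vectors
  have hker : ∀ z : Fin n → ℝ, L *ᵥ z = 0 → ∀ i j, z i = z j := by
    intro z hz
    have hq : (∑ i, ∑ j, if i < j then W i j * (z i - z j) ^ 2 else 0) = 0 := by
      rw [hquad z, hz]
      simp
    have hnn : ∀ i j : Fin n, 0 ≤ (if i < j then W i j * (z i - z j) ^ 2 else 0) := by
      intro i j
      split
      · exact mul_nonneg (hWnonneg i j) (sq_nonneg _)
      · exact le_refl 0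
    have hterm : ∀ i j : Fin n, i < j → W i j * (z i - z j) ^ 2 = 0 := by
      intro i j hij
      have h1 := (Finset.sum_eq_zero_iff_of_nonneg
        (fun i _ => Finset.sum_nonneg fun j _ => hnn i j)).1 hq i (Finset.mem_univ i)
      have h2 := (Finset.sum_eq_zero_iff_of_nonneg (fun j _ => hnn i j)).1 h1 j (Finset.mem_univ j)
      simpa [hij] using h2
    have hedge : ∀ i j, W i j ≠ 0 → z i = z j := by
      intro i j hW
      rcases lt_trichotomy i j with h | h | h
      · have := hterm i j h
        rcases mul_eq_zero.1 this with h' | h'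
        · exact absurd h' hW
        · have := pow_eq_zero_iff (n := 2) (by norm_num) |>.1 h'
          linarith [sub_eq_zero.1 this]
      · rw [h]
      · have := hterm j i h
        rw [← hWs i j] at this
        rcases mul_eq_zero.1 this with h' | h'
        · exact absurd h' hW
        · have := pow_eq_zero_iff (n := 2) (by norm_num) |>.1 h'
          linarith [sub_eq_zero.1 this]
    intro i j
    have hadj : ∀ a b, (SimpleGraph.fromRel fun i j => W i j ≠ 0).Adj a b → z a = z b := by
      intro a b hab
      rw [SimpleGraph.fromRel_adj] at hab
      rcases hab.2 with h | h
      · exact hedge a b h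
      · exact (hedge b a h).symm
    obtain ⟨p⟩ := hconn.preconnected i j
    induction p with
    | nil => rfl
    | cons h p ih => exact (hadj _ _ h).trans ih
  -- setup
  set x : Fin n → ℝ := μ - ν with hxdef
  have hsumx : ∑ i, x i = 0 := by
    simp only [hxdef, Pi.sub_apply, Finset.sum_sub_distrib, hμ.2, hν.2, sub_self]
  have hx0 : x ≠ 0 := sub_ne_zero.2 hμν
  -- x is in the range of L
  have hproj : (L * (L * Ldag)) = L := by
    calc L * (L * Ldag) = Lᵀ * (L * Ldag)ᵀ := by rw [hLsym, hpen3]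
      _ = Lᵀ * (Ldagᵀ * Lᵀ) := by rw [Matrix.transpose_mul]
      _ = (L * Ldag * L)ᵀ := by rw [Matrix.transpose_mul, Matrix.transpose_mul]
      _ = L := by rw [hpen1, hLsym]
  have hLr : L *ᵥ (x - (L * Ldag) *ᵥ x) = 0 := by
    rw [Matrix.mulVec_sub, Matrix.mulVec_mulVec, hproj, sub_self]
  set r : Fin n → ℝ := x - (L * Ldag) *ᵥ x with hrdef
  have hrconst : ∀ i j, r i = r j := hker r hLr
  obtain ⟨i₀⟩ : Nonempty (Fin n) := hconn.nonempty
  have hrx : r ⬝ᵥ x = 0 := by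
    have : r ⬝ᵥ x = ∑ i, r i₀ * x i := by
      rw [dotProduct]
      exact Finset.sum_congr rfl fun i _ => by rw [hrconst i i₀]
    rw [this, ← Finset.mul_sum, hsumx, mul_zero]
  have hrP : r ⬝ᵥ ((L * Ldag) *ᵥ x) = 0 := by
    rw [Matrix.dotProduct_mulVec, ← Matrix.vecMul_vecMul, ← Matrix.mulVec_transpose L r, hLsym,
      hLr, Matrix.zero_vecMul, zero_dotProduct]
  have hr0 : r = 0 := by
    rw [← dotProduct_self_eq_zero (v := r), hrdef, dotProduct_sub, ← hrdef, hrx, hrP,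
      sub_self]
  have hrange : L *ᵥ (Ldag *ᵥ x) = x := by
    have := sub_eq_zero.1 (hrdef ▸ hr0)
    rw [Matrix.mulVec_mulVec, ← this]
  set y : Fin n → ℝ := Ldag *ᵥ x with hydef
  set R : ℝ := x ⬝ᵥ Ldag *ᵥ x with hRdef
  have hRy : y ⬝ᵥ L *ᵥ y = R := by
    rw [hydef, hrange, dotProduct_comm, hRdef]
  have hfeas : ∀ φ : Fin n → ℝ, φ ⬝ᵥ x = 1 → 1 ≤ (φ ⬝ᵥ L *ᵥ φ) * R := by
    intro φ h1
    have h2 : φ ⬝ᵥ L *ᵥ y = 1 := by rw [hydef, hrange, h1]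
    calc (1 : ℝ) = (φ ⬝ᵥ L *ᵥ y) ^ 2 := by rw [h2]; ring
      _ ≤ (φ ⬝ᵥ L *ᵥ φ) * (y ⬝ᵥ L *ᵥ y) := hCS φ y
      _ = (φ ⬝ᵥ L *ᵥ φ) * R := by rw [hRy]
  -- R is positive
  have hxx : (0 : ℝ) < x ⬝ᵥ x := by
    rcases lt_or_eq_of_le (Finset.sum_nonneg fun i (_ : i ∈ Finset.univ) =>
      mul_self_nonneg (x i)) with h | h
    · exact h
    · exact absurd (dotProduct_self_eq_zero.1 h.symm) hx0
  have hRpos : 0 < R := by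
    have hφ0 : ((x ⬝ᵥ x)⁻¹ • x) ⬝ᵥ x = 1 := by
      rw [smul_dotProduct, smul_eq_mul, inv_mul_cancel₀ hxx.ne']
    have h1 := hfeas _ hφ0
    have h2 := hpos ((x ⬝ᵥ x)⁻¹ • x)
    nlinarith
  -- the infimum set
  set S : Set ℝ := {c : ℝ | ∃ φ : Fin n → ℝ, φ ⬝ᵥ x = 1 ∧
      c = ∑ i, ∑ j, if i < j then W i j * (φ i - φ j) ^ 2 else 0} with hSdef
  have hlb : ∀ c ∈ S, R⁻¹ ≤ c := by
    rintro c ⟨φ, h1, rfl⟩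
    rw [hquad φ]
    rw [inv_le_iff_one_le_mul₀ hRpos] -- may need adjustment
    exact hfeas φ h1
  have hmem : R⁻¹ ∈ S := by
    refine ⟨R⁻¹ • y, ?_, ?_⟩
    · rw [smul_dotProduct, smul_eq_mul, dotProduct_comm, ← hRdef,
        inv_mul_cancel₀ hRpos.ne']
    · rw [hquad, Matrix.mulVec_smul, smul_dotProduct, dotProduct_smul,
        smul_eq_mul, smul_eq_mul, hRy]
      field_simp
  have hInf : sInf S = R⁻¹ :=
    le_antisymm (csInf_le ⟨R⁻¹, hlb⟩ hmem) (le_csInf ⟨R⁻¹, hmem⟩ hlb)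
  rw [hInf]
  exact inv_mul_cancel₀ hRpos.ne'
end

section
/- Let L ∈ ℝ^{n×n} be a real symmetric positive semidefinite matrix and let t ≥ 0. Then the operator norm bound ‖ L† (I − e^{−tL}) x ‖₂ ≤ t ‖x‖₂ holds for every x ∈ ℝ^n, where L† is the Moore–Penrose pseudoinverse of L and e^{−tL} is the matrix exponential of −tL. -/
open Matrix

private lemma real_star_eq_transpose {n : ℕ} (A : Matrix (Fin n) (Fin n) ℝ) :
    star A = Aᵀ := by
  ext i j
  simp [Matrix.star_apply]

/-- Uniqueness of the Moore–Penrose pseudoinverse. -/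
private lemma pinv_unique {n : ℕ} (L A B : Matrix (Fin n) (Fin n) ℝ)
    (hA1 : L * A * L = L) (hA2 : A * L * A = A)
    (hA3 : (L * A)ᵀ = L * A) (hA4 : (A * L)ᵀ = A * L)
    (hB1 : L * B * L = L) (_hB2 : B * L * B = B)
    (hB3 : (L * B)ᵀ = L * B) (hB4 : (B * L)ᵀ = B * L) : A = B := by
  have e1 : Lᵀ = Lᵀ * (L * B) := by
    conv_lhs => rw [← hB1]
    rw [transpose_mul (L * B) L, hB3]
  have hLA : L * A = L * B := by
    calc L * A = (L * A)ᵀ := hA3.symm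
    _ = Aᵀ * Lᵀ := transpose_mul _ _
    _ = Aᵀ * (Lᵀ * (L * B)) := by rw [← e1]
    _ = (Aᵀ * Lᵀ) * (L * B) := (mul_assoc _ _ _).symm
    _ = (L * A)ᵀ * (L * B) := by rw [transpose_mul]
    _ = (L * A) * (L * B) := by rw [hA3]
    _ = (L * A * L) * B := by rw [← mul_assoc]
    _ = L * B := by rw [hA1]
  have e2 : Lᵀ = (A * L) * Lᵀ := by
    conv_lhs => rw [← hA1]
    rw [mul_assoc, transpose_mul L (A * L), hA4]
  have hAL : A * L = B * L := by
    refine Eq.symm ?_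
    calc B * L = (B * L)ᵀ := hB4.symm
    _ = Lᵀ * Bᵀ := transpose_mul _ _
    _ = ((A * L) * Lᵀ) * Bᵀ := by rw [← e2]
    _ = (A * L) * (Lᵀ * Bᵀ) := mul_assoc _ _ _
    _ = (A * L) * (B * L)ᵀ := by rw [transpose_mul]
    _ = (A * L) * (B * L) := by rw [hB4]
    _ = A * (L * B * L) := by rw [mul_assoc, ← mul_assoc L B L]
    _ = A * L := by rw [hB1]
  calc A = A * L * A := hA2.symm
  _ = A * (L * A) := by rw [mul_assoc]
  _ = A * (L * B) := by rw [hLA]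
  _ = (A * L) * B := by rw [mul_assoc]
  _ = (B * L) * B := by rw [hAL]
  _ = B := _hB2

/-- For a real symmetric positive semidefinite matrix `L`, its
Moore–Penrose pseudoinverse `L†` (characterized by the four Penrose equations),
and `t ≥ 0`, we have `‖L† (I - e^{-tL}) x‖₂ ≤ t ‖x‖₂` for every `x ∈ ℝⁿ`,
where `‖v‖₂ = √(Σ_i v_i²)` is the Euclidean norm. -/
theorem pinv_one_sub_heat_kernel_bound
    (n : ℕ) (L : Matrix (Fin n) (Fin n) ℝ) (hL : L.PosSemidef)
    (Ldag : Matrix (Fin n) (Fin n) ℝ)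
    (hpen1 : L * Ldag * L = L) (hpen2 : Ldag * L * Ldag = Ldag)
    (hpen3 : (L * Ldag)ᵀ = L * Ldag) (hpen4 : (Ldag * L)ᵀ = Ldag * L)
    (t : ℝ) (ht : 0 ≤ t) (x : Fin n → ℝ) :
    Real.sqrt (∑ i, ((Ldag * (1 - NormedSpace.exp (-(t • L)))).mulVec x i) ^ 2)
      ≤ t * Real.sqrt (∑ i, (x i) ^ 2) := by
  have hH : L.IsHermitian := hL.1
  set E : Fin n → ℝ := hH.eigenvalues with hE
  set P : Matrix (Fin n) (Fin n) ℝ := (hH.eigenvectorUnitary : Matrix (Fin n) (Fin n) ℝ)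
    with hPdef
  have hPmem := hH.eigenvectorUnitary.2
  have hP1 : P * Pᵀ = 1 := by
    have := (Matrix.mem_unitaryGroup_iff).mp hPmem
    rwa [real_star_eq_transpose] at this
  have hP2 : Pᵀ * P = 1 := by
    have := (Matrix.mem_unitaryGroup_iff').mp hPmem
    rwa [real_star_eq_transpose] at this
  have hspec : L = P * diagonal E * Pᵀ := by
    have h := hH.spectral_theorem
    rw [Unitary.conjStarAlgAut_apply, real_star_eq_transpose] at h
    convert h using 3
    all_goals rfl
  -- multiplication rule for conjugated diagonal matrices
  have key : ∀ v w : Fin n → ℝ,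
      (P * diagonal v * Pᵀ) * (P * diagonal w * Pᵀ)
        = P * diagonal (fun i => v i * w i) * Pᵀ := by
    intro v w
    simp only [mul_assoc]
    rw [← mul_assoc Pᵀ P, hP2, one_mul, ← mul_assoc (diagonal v) (diagonal w),
      diagonal_mul_diagonal]
  have symm_key : ∀ v : Fin n → ℝ,
      (P * diagonal v * Pᵀ)ᵀ = P * diagonal v * Pᵀ := by
    intro v
    simp [Matrix.transpose_mul, Matrix.diagonal_transpose, Matrix.mul_assoc]
  -- identify the pseudoinverse
  have hLd : Ldag = P * diagonal (fun i => (E i)⁻¹) * Pᵀ := by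
    set B := P * diagonal (fun i => (E i)⁻¹) * Pᵀ with hB
    have hd1 : (fun i => E i * (E i)⁻¹ * E i) = E := by
      funext i
      by_cases h : E i = 0
      · simp [h]
      · rw [mul_inv_cancel₀ h, one_mul]
    have hd2 : (fun i => (E i)⁻¹ * E i * (E i)⁻¹) = fun i => (E i)⁻¹ := by
      funext i
      by_cases h : E i = 0
      · simp [h]
      · rw [inv_mul_cancel₀ h, one_mul]
    have h1 : L * B * L = L := by
      conv_lhs => rw [hspec, hB, key, key, hd1]
      exact hspec.symm
    have h2 : B * L * B = B := by
      conv_lhs => rw [hspec, hB, key, key, hd2]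
    have h3 : (L * B)ᵀ = L * B := by
      rw [hspec, hB, key]; exact symm_key _
    have h4 : (B * L)ᵀ = B * L := by
      conv_lhs => rw [hspec, hB, key]
      conv_rhs => rw [hspec, hB, key]
      exact symm_key _
    exact pinv_unique L Ldag B hpen1 hpen2 hpen3 hpen4 h1 h2 h3 h4
  -- compute the matrix exponential
  have hPunit : IsUnit P := ⟨⟨P, Pᵀ, hP1, hP2⟩, rfl⟩
  have hPinv : P⁻¹ = Pᵀ := Matrix.inv_eq_right_inv hP1
  have hneg : -(t • L) = P * diagonal (fun i => -(t * E i)) * Pᵀ := by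
    have hdg : diagonal (fun i => -(t * E i)) = -(t • diagonal E) := by
      ext i j
      by_cases h : i = j
      · subst h; simp
      · simp [Matrix.diagonal_apply_ne _ h]
    rw [hspec, hdg]
    simp [Matrix.mul_neg, Matrix.neg_mul, Matrix.mul_smul, Matrix.smul_mul]
  have hexp : NormedSpace.exp (-(t • L))
      = P * diagonal (fun i => Real.exp (-(t * E i))) * Pᵀ := by
    rw [hneg, ← hPinv, Matrix.exp_conj P _ hPunit, Matrix.exp_diagonal, Pi.exp_def]
    congr 2
    · funext i
      rw [Real.exp_eq_exp_ℝ]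
  -- the composite matrix is conjugated-diagonal
  set g : Fin n → ℝ := fun i => (E i)⁻¹ * (1 - Real.exp (-(t * E i))) with hg
  have hone : (1 : Matrix (Fin n) (Fin n) ℝ) = P * diagonal (fun _ => (1:ℝ)) * Pᵀ := by
    rw [diagonal_one, mul_one, hP1]
  have hM : Ldag * (1 - NormedSpace.exp (-(t • L))) = P * diagonal g * Pᵀ := by
    have hsub : (1 : Matrix (Fin n) (Fin n) ℝ) - NormedSpace.exp (-(t • L))
        = P * diagonal (fun i => 1 - Real.exp (-(t * E i))) * Pᵀ := by
      rw [hexp, hone, ← Matrix.sub_mul, ← Matrix.mul_sub, ← diagonal_sub]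
    rw [hsub, hLd, key]
  -- eigenvalue bound
  have hgbound : ∀ i, (g i)^2 ≤ t^2 := by
    intro i
    have hEi : 0 ≤ E i := hL.eigenvalues_nonneg i
    have h0 : 0 ≤ g i ∧ g i ≤ t := by
      rcases eq_or_lt_of_le hEi with h | h
      · have hgi : g i = 0 := by simp [hg, ← h]
        exact ⟨le_of_eq hgi.symm, hgi ▸ ht⟩
      · have hu : 0 ≤ t * E i := mul_nonneg ht h.le
        have he1 : Real.exp (-(t * E i)) ≤ 1 := Real.exp_le_one_iff.mpr (by linarith)
        have he2 : 1 - Real.exp (-(t * E i)) ≤ t * E i := by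
          have := Real.add_one_le_exp (-(t * E i))
          linarith
        constructor
        · exact mul_nonneg (inv_nonneg.mpr hEi) (by linarith)
        · calc g i ≤ (E i)⁻¹ * (t * E i) := by
                exact mul_le_mul_of_nonneg_left he2 (inv_nonneg.mpr hEi)
          _ = t := by field_simp
    have := abs_le_abs h0.2 (by linarith [h0.1])
    calc (g i)^2 = |g i|^2 := (sq_abs _).symm
    _ ≤ |t|^2 := by
        apply pow_le_pow_left₀ (abs_nonneg _)
        rwa [abs_of_nonneg ht] at this ⊢
    _ = t^2 := by rw [sq_abs]
  -- orthogonality preserves the sum of squares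
  have horth : ∀ (Q : Matrix (Fin n) (Fin n) ℝ), Qᵀ * Q = 1 →
      ∀ v : Fin n → ℝ, (∑ i, (Q *ᵥ v) i ^ 2) = ∑ i, v i ^ 2 := by
    intro Q hQ v
    have h1 : (∑ i, (Q *ᵥ v) i ^ 2) = (Q *ᵥ v) ⬝ᵥ (Q *ᵥ v) := by
      simp [dotProduct, sq]
    have h2 : (∑ i, v i ^ 2) = v ⬝ᵥ v := by simp [dotProduct, sq]
    have h3 : (Q *ᵥ v) ᵥ* Q = v := by
      have h4 := vecMul_transpose Qᵀ (Q *ᵥ v)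
      rw [transpose_transpose] at h4
      rw [h4, mulVec_mulVec, hQ, one_mulVec]
    rw [h1, h2, dotProduct_mulVec, h3]
  -- final computation
  rw [hM]
  have hmv : (P * diagonal g * Pᵀ) *ᵥ x = P *ᵥ (diagonal g *ᵥ (Pᵀ *ᵥ x)) := by
    rw [mulVec_mulVec, mulVec_mulVec]
  rw [hmv]
  set y := Pᵀ *ᵥ x with hy
  have h1 : (∑ i, (P *ᵥ (diagonal g *ᵥ y)) i ^ 2) = ∑ i, (diagonal g *ᵥ y) i ^ 2 :=
    horth P hP2 _
  have h2 : (∑ i, y i ^ 2) = ∑ i, x i ^ 2 := by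
    have hPP : Pᵀᵀ * Pᵀ = 1 := by rw [transpose_transpose, hP1]
    exact horth Pᵀ hPP x
  have h3 : (∑ i, (diagonal g *ᵥ y) i ^ 2) ≤ t ^ 2 * ∑ i, x i ^ 2 := by
    rw [← h2, Finset.mul_sum]
    apply Finset.sum_le_sum
    intro i _
    rw [mulVec_diagonal, mul_pow]
    exact mul_le_mul_of_nonneg_right (hgbound i) (sq_nonneg _)
  calc Real.sqrt (∑ i, (P *ᵥ (diagonal g *ᵥ y)) i ^ 2)
      ≤ Real.sqrt (t ^ 2 * ∑ i, x i ^ 2) := Real.sqrt_le_sqrt (by rw [h1]; exact h3)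
  _ = t * Real.sqrt (∑ i, x i ^ 2) := by
      rw [Real.sqrt_mul (sq_nonneg t), Real.sqrt_sq ht]
end

section
/- Let L be the Laplacian of a finite connected weighted undirected graph on n ≥ 2 vertices with smallest positive eigenvalue λ > 0. Let μ, ν ∈ P(V), let η ∈ ℝ^n with 1ᵀη = 0, and for t ≥ 0 set ψ = L†(μ−ν) and ψ̃_t = L† e^{−tL} (μ − ν + η). Then ‖ψ − ψ̃_t‖₂ ≤ t ‖μ−ν‖₂ + λ^{−1} e^{−tλ} ‖η‖₂. -/
open Matrix

lemma dpr_tri (n : ℕ) (a b : Fin n → ℝ) :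
    Real.sqrt (∑ i, (a i + b i)^2) ≤ Real.sqrt (∑ i, (a i)^2) + Real.sqrt (∑ i, (b i)^2) := by
  have ha : (0:ℝ) ≤ ∑ i, (a i)^2 := Finset.sum_nonneg fun i _ => sq_nonneg _
  have hb : (0:ℝ) ≤ ∑ i, (b i)^2 := Finset.sum_nonneg fun i _ => sq_nonneg _
  have hcs : ∑ i, a i * b i ≤ Real.sqrt (∑ i, (a i)^2) * Real.sqrt (∑ i, (b i)^2) := by
    have h1 : (∑ i, a i * b i)^2 ≤ (∑ i, (a i)^2) * (∑ i, (b i)^2) :=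
      Finset.sum_mul_sq_le_sq_mul_sq _ _ _
    calc ∑ i, a i * b i ≤ |∑ i, a i * b i| := le_abs_self _
      _ = Real.sqrt ((∑ i, a i * b i)^2) := (Real.sqrt_sq_eq_abs _).symm
      _ ≤ Real.sqrt ((∑ i, (a i)^2) * (∑ i, (b i)^2)) := Real.sqrt_le_sqrt h1
      _ = _ := Real.sqrt_mul ha _
  have key : ∑ i, (a i + b i)^2 ≤ (Real.sqrt (∑ i, (a i)^2) + Real.sqrt (∑ i, (b i)^2))^2 := by
    have expand : ∑ i, (a i + b i)^2 = ∑ i, (a i)^2 + 2 * ∑ i, a i * b i + ∑ i, (b i)^2 := by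
      rw [Finset.mul_sum, ← Finset.sum_add_distrib, ← Finset.sum_add_distrib]
      exact Finset.sum_congr rfl fun i _ => by ring
    rw [expand, add_sq, Real.sq_sqrt ha, Real.sq_sqrt hb]
    nlinarith [hcs]
  calc Real.sqrt (∑ i, (a i + b i)^2)
      ≤ Real.sqrt ((Real.sqrt (∑ i, (a i)^2) + Real.sqrt (∑ i, (b i)^2))^2) :=
      Real.sqrt_le_sqrt key
    _ = _ := Real.sqrt_sq (by positivity)

lemma dpr_pinvUnique {n : ℕ} (A X Y : Matrix (Fin n) (Fin n) ℝ)
    (h1 : A * X * A = A) (h2 : X * A * X = X) (h3 : (A*X)ᵀ = A*X) (h4 : (X*A)ᵀ = X*A)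
    (g1 : A * Y * A = A) (g2 : Y * A * Y = Y) (g3 : (A*Y)ᵀ = A*Y) (g4 : (Y*A)ᵀ = Y*A) :
    X = Y := by
  have hAX : A * X = A * Y := by
    calc A * X = ((A*Y*A) * X)ᵀ := by rw [g1, h3]
      _ = ((A*Y)*(A*X))ᵀ := by simp only [mul_assoc]
      _ = (A*X)ᵀ * (A*Y)ᵀ := transpose_mul _ _
      _ = (A*X)*(A*Y) := by rw [h3, g3]
      _ = (A*X*A)*Y := by simp only [mul_assoc]
      _ = A*Y := by rw [h1]
  have hXA : X * A = Y * A := by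
    calc X * A = (X*(A*Y*A))ᵀ := by rw [g1, h4]
      _ = ((X*A)*(Y*A))ᵀ := by simp only [mul_assoc]
      _ = (Y*A)ᵀ*(X*A)ᵀ := transpose_mul _ _
      _ = (Y*A)*(X*A) := by rw [h4, g4]
      _ = Y*(A*X*A) := by simp only [mul_assoc]
      _ = Y*A := by rw [h1]
  calc X = X*A*X := h2.symm
    _ = Y*A*X := by rw [hXA]
    _ = Y*(A*X) := by rw [mul_assoc]
    _ = Y*(A*Y) := by rw [hAX]
    _ = Y*A*Y := by rw [mul_assoc]
    _ = Y := g2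

lemma dpr_lap_psd {n : ℕ} (W : Matrix (Fin n) (Fin n) ℝ)
    (hWsymm : W.IsSymm) (hWnonneg : ∀ i j, 0 ≤ W i j)
    (x : Fin n → ℝ) :
    0 ≤ x ⬝ᵥ (Matrix.diagonal (fun i => ∑ j, W i j) - W) *ᵥ x := by
  have hsymm : ∀ i j, W j i = W i j := fun i j => (hWsymm.apply j i).symm
  have e1 : x ⬝ᵥ (Matrix.diagonal (fun i => ∑ j, W i j) - W) *ᵥ x
      = (∑ i, ∑ j, W i j * (x i)^2) - ∑ i, ∑ j, W i j * (x i * x j) := by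
    rw [Matrix.sub_mulVec, dotProduct_sub]
    congr 1
    · rw [dotProduct]
      refine Finset.sum_congr rfl fun i _ => ?_
      rw [mulVec_diagonal, Finset.sum_mul, Finset.mul_sum]
      exact Finset.sum_congr rfl fun j _ => by ring
    · rw [dotProduct]
      refine Finset.sum_congr rfl fun i _ => ?_
      rw [mulVec, dotProduct, Finset.mul_sum]
      exact Finset.sum_congr rfl fun j _ => by ring
  have swap : ∑ i, ∑ j, W i j * (x j)^2 = ∑ i, ∑ j, W i j * (x i)^2 := by
    rw [Finset.sum_comm]
    exact Finset.sum_congr rfl fun i _ => Finset.sum_congr rfl fun j _ => by rw [hsymm]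
  have e2 : ∑ i, ∑ j, W i j * (x i - x j)^2
      = (∑ i, ∑ j, W i j * (x i)^2) + (∑ i, ∑ j, W i j * (x j)^2)
        - 2 * ∑ i, ∑ j, W i j * (x i * x j) := by
    rw [Finset.mul_sum, ← Finset.sum_add_distrib, ← Finset.sum_sub_distrib]
    refine Finset.sum_congr rfl fun i _ => ?_
    rw [Finset.mul_sum, ← Finset.sum_add_distrib, ← Finset.sum_sub_distrib]
    exact Finset.sum_congr rfl fun j _ => by ring
  have hpos : 0 ≤ ∑ i, ∑ j, W i j * (x i - x j)^2 :=
    Finset.sum_nonneg fun i _ => Finset.sum_nonneg fun j _ =>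
      mul_nonneg (hWnonneg i j) (sq_nonneg _)
  rw [e2, swap] at hpos
  rw [e1]
  linarith

lemma dpr_orth_sum {n : ℕ} (U : Matrix (Fin n) (Fin n) ℝ) (h : Uᵀ * U = 1) (z : Fin n → ℝ) :
    ∑ i, ((U *ᵥ z) i)^2 = ∑ i, (z i)^2 := by
  have h1 : ∀ v : Fin n → ℝ, ∑ i, (v i)^2 = v ⬝ᵥ v := by
    intro v; simp [dotProduct, sq]
  rw [h1, h1, dotProduct_mulVec, ← mulVec_transpose, mulVec_mulVec, h, one_mulVec]

lemma dpr_conj_bound {n : ℕ} (U : Matrix (Fin n) (Fin n) ℝ)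
    (hU1 : Uᵀ * U = 1) (hU2 : U * Uᵀ = 1)
    (f x : Fin n → ℝ) (c : ℝ) (hc : 0 ≤ c) (hf : ∀ i, |f i| ≤ c) :
    Real.sqrt (∑ i, (((U * diagonal f * Uᵀ) *ᵥ x) i)^2)
      ≤ c * Real.sqrt (∑ i, (x i)^2) := by
  have hz : (U * diagonal f * Uᵀ) *ᵥ x = U *ᵥ (diagonal f *ᵥ (Uᵀ *ᵥ x)) := by
    rw [← mulVec_mulVec, ← mulVec_mulVec]
  set z : Fin n → ℝ := Uᵀ *ᵥ x with hzdef
  have hzx : ∑ i, (z i)^2 = ∑ i, (x i)^2 := by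
    have : (Uᵀ)ᵀ * Uᵀ = 1 := by rw [transpose_transpose]; exact hU2
    exact dpr_orth_sum Uᵀ this x
  have hsum : ∑ i, (((U * diagonal f * Uᵀ) *ᵥ x) i)^2 = ∑ i, (f i * z i)^2 := by
    rw [hz, dpr_orth_sum U hU1]
    refine Finset.sum_congr rfl fun i _ => ?_
    rw [mulVec_diagonal]
  have hle : ∑ i, (f i * z i)^2 ≤ c^2 * ∑ i, (x i)^2 := by
    rw [← hzx, Finset.mul_sum]
    refine Finset.sum_le_sum fun i _ => ?_
    have : (f i)^2 ≤ c^2 := sq_le_sq' (neg_le_of_abs_le (hf i)) (le_of_abs_le (hf i))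
    calc (f i * z i)^2 = (f i)^2 * (z i)^2 := by ring
      _ ≤ c^2 * (z i)^2 := mul_le_mul_of_nonneg_right this (sq_nonneg _)
  calc Real.sqrt (∑ i, (((U * diagonal f * Uᵀ) *ᵥ x) i)^2)
      ≤ Real.sqrt (c^2 * ∑ i, (x i)^2) := by rw [hsum]; exact Real.sqrt_le_sqrt hle
    _ = c * Real.sqrt (∑ i, (x i)^2) := by
        rw [Real.sqrt_mul (sq_nonneg c), Real.sqrt_sq hc]

lemma dpr_diag_sub {n : ℕ} (f h : Fin n → ℝ) :
    Matrix.diagonal (fun i => f i - h i) = Matrix.diagonal f - Matrix.diagonal h := by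
  ext i j
  by_cases hij : i = j <;> simp [Matrix.diagonal_apply, hij]

/-- **robustness of diffused potentials.** Let `L = D - W` be the
Laplacian of a finite connected weighted undirected graph on `n ≥ 2` vertices (with `W`
the symmetric weighted adjacency matrix, nonnegative entries and zero diagonal), let
`Ldag` be its Moore–Penrose pseudoinverse, and let `lam > 0` be the smallest positive
eigenvalue of `L`. Let `μ, ν` be probability measures on the vertices, let `η` satisfy
`1ᵀη = 0`, and for `t ≥ 0` set `ψ = L†(μ-ν)` and `ψ̃_t = L† e^{-tL} (μ - ν + η)`. Then
`‖ψ - ψ̃_t‖₂ ≤ t ‖μ-ν‖₂ + lam⁻¹ e^{-t·lam} ‖η‖₂`,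
where `‖v‖₂ = √(Σ_i v_i²)` is the Euclidean norm. -/
theorem diffused_potential_robustness
    (n : ℕ) (hn : 2 ≤ n) (W : Matrix (Fin n) (Fin n) ℝ)
    (hWsymm : W.IsSymm) (hWnonneg : ∀ i j, 0 ≤ W i j) (hWdiag : ∀ i, W i i = 0)
    (hconn : (SimpleGraph.fromRel fun i j => W i j ≠ 0).Connected)
    (L : Matrix (Fin n) (Fin n) ℝ)
    (hL : L = Matrix.diagonal (fun i => ∑ j, W i j) - W)
    (Ldag : Matrix (Fin n) (Fin n) ℝ)
    (hpen1 : L * Ldag * L = L) (hpen2 : Ldag * L * Ldag = Ldag)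
    (hpen3 : (L * Ldag)ᵀ = L * Ldag) (hpen4 : (Ldag * L)ᵀ = Ldag * L)
    (lam : ℝ)
    (hlam : IsLeast {c : ℝ | 0 < c ∧ ∃ v : Fin n → ℝ, v ≠ 0 ∧ L.mulVec v = c • v} lam)
    (μ ν : Fin n → ℝ)
    (hμ : (∀ i, 0 ≤ μ i) ∧ ∑ i, μ i = 1)
    (hν : (∀ i, 0 ≤ ν i) ∧ ∑ i, ν i = 1)
    (η : Fin n → ℝ) (hη : ∑ i, η i = 0)
    (t : ℝ) (ht : 0 ≤ t)
    (ψ ψt : Fin n → ℝ)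
    (hψ : ψ = Ldag.mulVec (μ - ν))
    (hψt : ψt = (Ldag * NormedSpace.exp (-(t • L))).mulVec (μ - ν + η)) :
    Real.sqrt (∑ i, (ψ i - ψt i) ^ 2)
      ≤ t * Real.sqrt (∑ i, (μ i - ν i) ^ 2)
        + lam⁻¹ * Real.exp (-(t * lam)) * Real.sqrt (∑ i, (η i) ^ 2) := by
  have hlam0 : 0 < lam := hlam.1.1
  -- L is symmetric / Hermitian
  have hLsymm : Lᵀ = L := by
    rw [hL, transpose_sub, diagonal_transpose, hWsymm.eq]
  have hHerm : L.IsHermitian := by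
    show Lᴴ = L
    rw [conjTranspose_eq_transpose_of_trivial]
    exact hLsymm
  -- spectral setup
  set U : Matrix (Fin n) (Fin n) ℝ := (hHerm.eigenvectorUnitary : Matrix (Fin n) (Fin n) ℝ)
    with hUdef
  set d : Fin n → ℝ := hHerm.eigenvalues with hddef
  have hstar : star U = Uᵀ := by
    rw [Matrix.star_eq_conjTranspose, conjTranspose_eq_transpose_of_trivial]
  have hU1 : Uᵀ * U = 1 := by
    rw [← hstar]; exact Unitary.coe_star_mul_self hHerm.eigenvectorUnitary
  have hU2 : U * Uᵀ = 1 := by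
    rw [← hstar]; exact Unitary.coe_mul_star_self hHerm.eigenvectorUnitary
  have hspec : L = U * diagonal d * Uᵀ := by
    rw [← hstar]
    have := hHerm.spectral_theorem
    rw [Unitary.conjStarAlgAut_apply] at this
    convert this using 3 <;> rfl
  have hinst : Invertible U := invertibleOfLeftInverse U Uᵀ hU1
  have hUunit : IsUnit U := isUnit_of_invertible U
  have hUinv : U⁻¹ = Uᵀ := inv_eq_left_inv hU1
  -- eigenvalue facts
  have hpsd : ∀ x : Fin n → ℝ, 0 ≤ x ⬝ᵥ L *ᵥ x := by
    intro x; rw [hL]; exact dpr_lap_psd W hWsymm hWnonneg x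
  have heig : ∀ i, 0 ≤ d i ∧ (d i ≠ 0 → lam ≤ d i) := by
    intro i
    set v : Fin n → ℝ := fun j => U j i with hvdef
    have hv : v = ⇑(hHerm.eigenvectorBasis i) := by
      funext j
      rw [hvdef, hUdef]
      exact hHerm.eigenvectorUnitary_apply j i
    have hvv : v ⬝ᵥ v = 1 := by
      have := congrFun (congrFun hU1 i) i
      simpa [Matrix.mul_apply, Matrix.one_apply, dotProduct, Matrix.transpose_apply,
        hvdef] using this
    have hLv : L *ᵥ v = d i • v := by
      rw [hv]; exact hHerm.mulVec_eigenvectorBasis i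
    have hvne : v ≠ 0 := by
      intro h0
      rw [h0] at hvv
      simp [dotProduct] at hvv
    have hdnn : 0 ≤ d i := by
      have h1 : v ⬝ᵥ L *ᵥ v = d i := by
        rw [hLv, dotProduct_smul, hvv]; simp
      have := hpsd v
      rw [h1] at this
      exact this
    refine ⟨hdnn, fun hne => ?_⟩
    exact hlam.2 ⟨lt_of_le_of_ne hdnn (Ne.symm hne), v, hvne, hLv⟩
  -- conjugation algebra
  have hCmul : ∀ f h : Fin n → ℝ,
      (U * diagonal f * Uᵀ) * (U * diagonal h * Uᵀ)
        = U * diagonal (fun i => f i * h i) * Uᵀ := by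
    intro f h
    calc U * diagonal f * Uᵀ * (U * diagonal h * Uᵀ)
        = U * (diagonal f * ((Uᵀ * U) * (diagonal h * Uᵀ))) := by simp only [Matrix.mul_assoc]
      _ = U * (diagonal f * (diagonal h * Uᵀ)) := by rw [hU1, one_mul]
      _ = U * ((diagonal f * diagonal h) * Uᵀ) := by rw [Matrix.mul_assoc]
      _ = U * (diagonal (fun i => f i * h i) * Uᵀ) := by rw [diagonal_mul_diagonal]
      _ = U * diagonal (fun i => f i * h i) * Uᵀ := by rw [Matrix.mul_assoc]
  have hCT : ∀ f : Fin n → ℝ, (U * diagonal f * Uᵀ)ᵀ = U * diagonal f * Uᵀ := by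
    intro f
    rw [transpose_mul, transpose_mul, transpose_transpose, diagonal_transpose]
    simp only [Matrix.mul_assoc]
  -- pseudoinverse identification
  set g : Fin n → ℝ := fun i => if d i = 0 then 0 else (d i)⁻¹ with hgdef
  set M : Matrix (Fin n) (Fin n) ℝ := U * diagonal g * Uᵀ with hMdef
  have hdgd : (fun i => (d i * g i) * d i) = d := by
    funext i
    by_cases hdi : d i = 0 <;> field_simp [hgdef, hdi] <;> simp [hgdef, hdi]
  have hgdg : (fun i => (g i * d i) * g i) = g := by
    funext i
    by_cases hdi : d i = 0 <;> field_simp [hgdef, hdi] <;> simp [hgdef, hdi]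
  have pm1 : L * M * M = M → True := fun _ => trivial
  have hLM : L * M = U * diagonal (fun i => d i * g i) * Uᵀ := by
    rw [hspec, hMdef, hCmul]
  have hML : M * L = U * diagonal (fun i => g i * d i) * Uᵀ := by
    rw [hspec, hMdef, hCmul]
  have hm1 : L * M * L = L := by
    rw [hLM, hspec, hCmul, hdgd, ← hspec]
  have hm2 : M * L * M = M := by
    rw [hML, hMdef, hCmul, hgdg]
  have hm3 : (L * M)ᵀ = L * M := by rw [hLM]; exact hCT _
  have hm4 : (M * L)ᵀ = M * L := by rw [hML]; exact hCT _
  have hLdagM : Ldag = M :=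
    dpr_pinvUnique L Ldag M hpen1 hpen2 hpen3 hpen4 hm1 hm2 hm3 hm4
  -- exponential
  set e : Fin n → ℝ := fun i => Real.exp (-(t * d i)) with hedef
  have hexp : NormedSpace.exp (-(t • L)) = U * diagonal e * Uᵀ := by
    have h1 : -(t • L) = U * diagonal (fun i => -(t * d i)) * U⁻¹ := by
      rw [hUinv, hspec]
      have hfun : (fun i => -(t * d i)) = (-(t • d)) := by funext i; simp
      have h2 : diagonal (-(t • d)) = -(t • diagonal d) := by
        rw [show -(t • d) = fun i => -((t • d) i) from rfl, ← Matrix.diagonal_neg,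
          Matrix.diagonal_smul]
      rw [hfun, h2]
      simp [Matrix.mul_smul, Matrix.smul_mul, Matrix.mul_neg, Matrix.neg_mul]
    rw [h1, Matrix.exp_conj U _ hUunit, hUinv]
    congr 2
    rw [Matrix.exp_diagonal, Pi.exp_def, ← Real.exp_eq_exp_ℝ]
  -- decomposition
  set h1 : Fin n → ℝ := fun i => g i - g i * e i with hh1def
  set h2 : Fin n → ℝ := fun i => g i * e i with hh2def
  have hA1 : M - M * (U * diagonal e * Uᵀ) = U * diagonal h1 * Uᵀ := by
    rw [hMdef, hCmul, hh1def, dpr_diag_sub, Matrix.mul_sub, Matrix.sub_mul]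
  have hA2 : M * (U * diagonal e * Uᵀ) = U * diagonal h2 * Uᵀ := by
    rw [hMdef, hCmul]
  have hvec : ∀ i, ψ i - ψt i
      = ((U * diagonal h1 * Uᵀ) *ᵥ (μ - ν)) i + ((U * diagonal h2 * Uᵀ) *ᵥ (-η)) i := by
    intro i
    rw [hψ, hψt, hLdagM, hexp, ← hA1, ← hA2]
    simp only [Matrix.sub_mulVec, Matrix.mulVec_add, Matrix.mulVec_neg, Pi.add_apply,
      Pi.sub_apply, Pi.neg_apply]
    ring
  -- component bounds
  have hb1 : ∀ i, |h1 i| ≤ t := by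
    intro i
    by_cases hdi : d i = 0
    · simp [hh1def, hgdef, hdi, ht]
    · obtain ⟨hdnn, hge⟩ := heig i
      have hdl : lam ≤ d i := hge hdi
      have hdp : 0 < d i := lt_of_le_of_ne hdnn (Ne.symm hdi)
      have hgi : g i = (d i)⁻¹ := by simp [hgdef, hdi]
      have he1 : e i ≤ 1 := by
        rw [hedef]
        apply Real.exp_le_one_iff.mpr
        have : 0 ≤ t * d i := mul_nonneg ht hdp.le
        linarith
      have he0 : 0 < e i := Real.exp_pos _
      have hexpge : 1 - e i ≤ t * d i := by
        have := Real.add_one_le_exp (-(t * d i))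
        rw [hedef]
        simp only
        linarith
      have hipos : 0 < (d i)⁻¹ := inv_pos.mpr hdp
      have hinv : (d i)⁻¹ * d i = 1 := inv_mul_cancel₀ hdi
      have hval : h1 i = (d i)⁻¹ * (1 - e i) := by
        rw [hh1def]; simp only [hgi]; ring
      rw [hval, abs_of_nonneg (mul_nonneg hipos.le (by linarith))]
      have := mul_le_mul_of_nonneg_left hexpge hipos.le
      calc (d i)⁻¹ * (1 - e i) ≤ (d i)⁻¹ * (t * d i) := this
        _ = t * ((d i)⁻¹ * d i) := by ring
        _ = t := by rw [hinv, mul_one]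
  have hc2 : 0 ≤ lam⁻¹ * Real.exp (-(t * lam)) := by positivity
  have hb2 : ∀ i, |h2 i| ≤ lam⁻¹ * Real.exp (-(t * lam)) := by
    intro i
    by_cases hdi : d i = 0
    · simpa [hh2def, hgdef, hdi] using hc2
    · obtain ⟨hdnn, hge⟩ := heig i
      have hdl : lam ≤ d i := hge hdi
      have hdp : 0 < d i := lt_of_le_of_ne hdnn (Ne.symm hdi)
      have hgi : g i = (d i)⁻¹ := by simp [hgdef, hdi]
      have he0 : 0 < e i := Real.exp_pos _
      have h2v : h2 i = (d i)⁻¹ * e i := by simp only [hh2def]; rw [hgi]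
      rw [h2v, abs_of_nonneg (by positivity)]
      have hinv_le : (d i)⁻¹ ≤ lam⁻¹ := by
        apply inv_anti₀ hlam0 hdl
      have hexp_le : e i ≤ Real.exp (-(t * lam)) := by
        rw [hedef]
        apply Real.exp_le_exp.mpr
        have : t * lam ≤ t * d i := mul_le_mul_of_nonneg_left hdl ht
        linarith
      exact mul_le_mul hinv_le hexp_le he0.le (inv_nonneg.mpr hlam0.le)
  -- assemble
  have step1 : Real.sqrt (∑ i, (ψ i - ψt i)^2)
      = Real.sqrt (∑ i, (((U * diagonal h1 * Uᵀ) *ᵥ (μ - ν)) i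
          + ((U * diagonal h2 * Uᵀ) *ᵥ (-η)) i)^2) := by
    congr 1
    exact Finset.sum_congr rfl fun i _ => by rw [hvec i]
  rw [step1]
  have hbd1 : Real.sqrt (∑ i, (((U * diagonal h1 * Uᵀ) *ᵥ (μ - ν)) i)^2)
      ≤ t * Real.sqrt (∑ i, ((μ - ν) i)^2) :=
    dpr_conj_bound U hU1 hU2 h1 (μ - ν) t ht hb1
  have hbd2 : Real.sqrt (∑ i, (((U * diagonal h2 * Uᵀ) *ᵥ (-η)) i)^2)
      ≤ (lam⁻¹ * Real.exp (-(t * lam))) * Real.sqrt (∑ i, ((-η) i)^2) :=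
    dpr_conj_bound U hU1 hU2 h2 (-η) _ hc2 hb2
  have hμν : ∑ i, ((μ - ν) i)^2 = ∑ i, (μ i - ν i)^2 := by
    exact Finset.sum_congr rfl fun i _ => by simp [Pi.sub_apply]
  have hηη : ∑ i, ((-η) i)^2 = ∑ i, (η i)^2 := by
    exact Finset.sum_congr rfl fun i _ => by simp
  calc Real.sqrt (∑ i, (((U * diagonal h1 * Uᵀ) *ᵥ (μ - ν)) i
          + ((U * diagonal h2 * Uᵀ) *ᵥ (-η)) i)^2)
      ≤ Real.sqrt (∑ i, (((U * diagonal h1 * Uᵀ) *ᵥ (μ - ν)) i)^2)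
        + Real.sqrt (∑ i, (((U * diagonal h2 * Uᵀ) *ᵥ (-η)) i)^2) := dpr_tri n _ _
    _ ≤ t * Real.sqrt (∑ i, ((μ - ν) i)^2)
        + (lam⁻¹ * Real.exp (-(t * lam))) * Real.sqrt (∑ i, ((-η) i)^2) :=
        add_le_add hbd1 hbd2
    _ = t * Real.sqrt (∑ i, (μ i - ν i)^2)
        + lam⁻¹ * Real.exp (-(t * lam)) * Real.sqrt (∑ i, (η i)^2) := by
        rw [hμν, hηη]
end
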